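/- If f : S₁ × ... × Sₙ → ℤ is order-preserving and each Gᵢ is an Sᵢ-valued well-tempered scoring game with gap_0(Gᵢ) = 0, then gap_0(f̃(G₁,...,Gₙ)) = 0, where f̃ is the extension of f to games. -/

import Mathlib

/-- Well-tempered scoring game trees: an integer (final score) or a position
with lists of Left and Right options. -/
inductive WT : Type where
  | int : ℤ → WT
  | node : List WT → List WT → WT

namespace WT

/-- Left options. -/
def lopts : WT → List WT
  | int _ => []
  | node L _ => L

/-- Right options. -/
def ropts : WT → List WT
  | int _ => []
  | node _ R => R

theorem sizeOf_lt_of_mem_lopts : ∀ {G g : WT}, g ∈ G.lopts → sizeOf g < sizeOf G := by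
  intro G g h
  cases G with
  | int n => simp [lopts] at h
  | node L R =>
    simp only [lopts] at h
    have h1 := List.sizeOf_lt_of_mem h
    have h2 : sizeOf (WT.node L R) = 1 + sizeOf L + sizeOf R := by simp
    omega

theorem sizeOf_lt_of_mem_ropts : ∀ {G g : WT}, g ∈ G.ropts → sizeOf g < sizeOf G := by
  intro G g h
  cases G with
  | int n => simp [ropts] at h
  | node L R =>
    simp only [ropts] at h
    have h1 := List.sizeOf_lt_of_mem h
    have h2 : sizeOf (WT.node L R) = 1 + sizeOf L + sizeOf R := by simp
    omega

/-- Disjunctive sum of two games. -/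
def add (G H : WT) : WT :=
  match G, H with
  | int m, int n => int (m + n)
  | G, H =>
    node ((G.lopts.attach.map fun g => add g.1 H) ++ (H.lopts.attach.map fun h => add G h.1))
         ((G.ropts.attach.map fun g => add g.1 H) ++ (H.ropts.attach.map fun h => add G h.1))
termination_by sizeOf G + sizeOf H
decreasing_by
  all_goals
    first
      | (have := sizeOf_lt_of_mem_lopts g.2; omega)
      | (have := sizeOf_lt_of_mem_lopts h.2; omega)
      | (have := sizeOf_lt_of_mem_ropts g.2; omega)
      | (have := sizeOf_lt_of_mem_ropts h.2; omega)

/-- Negation of a game: swap players and negate scores. -/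
def neg : WT → WT
  | int n => int (-n)
  | node L R =>
    node ((WT.node L R).ropts.attach.map fun g => neg g.1)
         ((WT.node L R).lopts.attach.map fun g => neg g.1)
termination_by G => sizeOf G
decreasing_by
  all_goals
    first
      | exact sizeOf_lt_of_mem_lopts g.2
      | exact sizeOf_lt_of_mem_ropts g.2

def lmax : List ℤ → ℤ
  | [] => 0
  | x :: xs => xs.foldl max x

def lmin : List ℤ → ℤ
  | [] => 0
  | x :: xs => xs.foldl min x

/-- The pair (left outcome, right outcome). -/
def out : WT → ℤ × ℤ
  | int n => (n, n)
  | node L R =>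
    (lmax ((WT.node L R).lopts.attach.map fun g => (out g.1).2),
     lmin ((WT.node L R).ropts.attach.map fun g => (out g.1).1))
termination_by G => sizeOf G
decreasing_by
  all_goals
    first
      | exact sizeOf_lt_of_mem_lopts g.2
      | exact sizeOf_lt_of_mem_ropts g.2

/-- Left outcome L(G): optimal score when Left moves first. -/
def Lout (G : WT) : ℤ := G.out.1

/-- Right outcome R(G): optimal score when Right moves first. -/
def Rout (G : WT) : ℤ := G.out.2

/-- `IsWT G p` : `G` is a well-tempered game of parity `p`
(`false` = even-tempered, `true` = odd-tempered). -/
inductive IsWT : WT → Bool → Prop where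
  | int (n : ℤ) : IsWT (WT.int n) false
  | node {L R : List WT} {p : Bool} (hL : L ≠ []) (hR : R ≠ [])
      (hLp : ∀ g ∈ L, IsWT g p) (hRp : ∀ g ∈ R, IsWT g p) :
      IsWT (WT.node L R) (!p)

/-- `G` is a well-tempered game (of some parity). -/
def Wt (G : WT) : Prop := ∃ p, IsWT G p

/-- Parity, computed structurally (`false` = even-tempered, `true` = odd-tempered;
agrees with `IsWT` on well-tempered games). -/
def par : WT → Bool
  | int _ => false
  | node [] _ => true
  | node (g :: _) _ => !(par g)

/-- Final score under optimal play when Left moves last. -/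
def Lf (G : WT) : ℤ := if G.par then G.Lout else G.Rout

/-- Final score under optimal play when Right moves last. -/
def Rf (G : WT) : ℤ := if G.par then G.Rout else G.Lout

/-- `G ≲ H` : for every well-tempered `X`, `L(G+X) ≤ L(H+X)` and `R(G+X) ≤ R(H+X)`. -/
def Le (G H : WT) : Prop :=
  ∀ X : WT, X.Wt → (G.add X).Lout ≤ (H.add X).Lout ∧ (G.add X).Rout ≤ (H.add X).Rout

/-- `G ≳ H`. -/
def Ge (G H : WT) : Prop := Le H G

/-- `G ≈ H` : equivalence of scoring games. -/
def Equiv (G H : WT) : Prop :=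
  ∀ X : WT, X.Wt → (G.add X).Lout = (H.add X).Lout ∧ (G.add X).Rout = (H.add X).Rout

/-- `G` and `H` are well-tempered with the same parity. -/
def SamePar (G H : WT) : Prop := ∃ p, IsWT G p ∧ IsWT H p

/-- `G` takes values in `S`: every integer subgame lies in `S`. -/
inductive Valued (S : Set ℤ) : WT → Prop where
  | int {n : ℤ} : n ∈ S → Valued S (WT.int n)
  | node {L R : List WT} : (∀ g ∈ L, Valued S g) → (∀ g ∈ R, Valued S g) →
      Valued S (WT.node L R)

/-- `Subgame H G` : `H` is a subgame of `G`. -/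
inductive Subgame : WT → WT → Prop where
  | refl (G : WT) : Subgame G G
  | left {H G' : WT} {L R : List WT} : G' ∈ L → Subgame H G' → Subgame H (WT.node L R)
  | right {H G' : WT} {L R : List WT} : G' ∈ R → Subgame H G' → Subgame H (WT.node L R)

/-- `gap G p` : supremum of `R(H) - L(H)` over subgames `H` of `G` of parity `p`
(as an element of `WithBot ℤ`; the supremum of the empty set is `⊥ = -∞`). -/
noncomputable def gap (G : WT) (p : Bool) : WithBot ℤ :=
  sSup {x : WithBot ℤ | ∃ H : WT, Subgame H G ∧ IsWT H p ∧ x = ((H.Rout - H.Lout : ℤ) : WithBot ℤ)}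

/-- Heating by `t`. -/
def heat (t : ℤ) : WT → WT
  | int n => int n
  | node L R =>
    node ((WT.node L R).lopts.attach.map fun g => (WT.int t).add (heat t g.1))
         ((WT.node L R).ropts.attach.map fun g => (WT.int (-t)).add (heat t g.1))
termination_by G => sizeOf G
decreasing_by
  all_goals
    first
      | exact sizeOf_lt_of_mem_lopts g.2
      | exact sizeOf_lt_of_mem_ropts g.2

end WT

namespace WT

def isInt : WT → Bool
  | int _ => true
  | node _ _ => false

def toInt : WT → ℤ
  | int n => n
  | node _ _ => 0

noncomputable def tupSize {n : ℕ} (G : Fin n → WT) : ℕ := ∑ i, sizeOf (G i)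

theorem tupSize_update_lt {n : ℕ} (G : Fin n → WT) (i : Fin n) (g : WT)
    (h : sizeOf g < sizeOf (G i)) : tupSize (Function.update G i g) < tupSize G := by
  unfold tupSize
  have h1 : ∀ s : Fin n → WT,
      ∑ j, sizeOf (s j) = sizeOf (s i) + ∑ j ∈ Finset.univ.erase i, sizeOf (s j) :=
    fun s => (Finset.add_sum_erase _ _ (Finset.mem_univ i)).symm
  rw [h1, h1]
  have h2 : ∑ j ∈ Finset.univ.erase i, sizeOf (Function.update G i g j) =
      ∑ j ∈ Finset.univ.erase i, sizeOf (G j) :=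
    Finset.sum_congr rfl fun j hj => by
      rw [Function.update_of_ne (Finset.ne_of_mem_erase hj)]
  rw [h2, Function.update_self]
  omega

/-- The extension of `f : ℤⁿ → ℤ` to games: play the `n` games in parallel and combine
the final scores with `f`; a move is a move in exactly one component. -/
def fextn {n : ℕ} (f : (Fin n → ℤ) → ℤ) (G : Fin n → WT) : WT :=
  if h : ∀ i, (G i).isInt = true then int (f fun i => (G i).toInt)
  else
    node
      ((List.finRange n).flatMap fun i =>
        (G i).lopts.attach.map fun g => fextn f (Function.update G i g.1))
      ((List.finRange n).flatMap fun i =>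
        (G i).ropts.attach.map fun g => fextn f (Function.update G i g.1))
termination_by tupSize G
decreasing_by
  all_goals
    first
      | exact tupSize_update_lt G i g.1 (sizeOf_lt_of_mem_lopts g.2)
      | exact tupSize_update_lt G i g.1 (sizeOf_lt_of_mem_ropts g.2)

end WT

namespace WT

/-! ### Basic lemmas about lmax / lmin -/

theorem le_foldl_max : ∀ (l : List ℤ) (a : ℤ), a ≤ l.foldl max a
  | [], _ => le_refl _
  | x :: xs, a => le_trans (le_max_left a x) (le_foldl_max xs (max a x))

theorem mem_le_foldl_max : ∀ (l : List ℤ) (a x : ℤ), x ∈ l → x ≤ l.foldl max a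
  | [], _, _, h => by simp at h
  | y :: ys, a, x, h => by
    rcases List.mem_cons.1 h with h | h
    · subst h; exact le_trans (le_max_right a x) (le_foldl_max ys (max a x))
    · exact mem_le_foldl_max ys (max a y) x h

theorem foldl_max_le : ∀ (l : List ℤ) (a b : ℤ), a ≤ b → (∀ x ∈ l, x ≤ b) → l.foldl max a ≤ b
  | [], _, _, ha, _ => ha
  | y :: ys, a, b, ha, h => by
    refine foldl_max_le ys (max a y) b (max_le ha (h y (by simp))) fun x hx => h x (by simp [hx])

theorem foldl_max_mem : ∀ (l : List ℤ) (a : ℤ), l.foldl max a = a ∨ l.foldl max a ∈ l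
  | [], a => Or.inl rfl
  | y :: ys, a => by
    rcases foldl_max_mem ys (max a y) with h | h
    · rcases max_choice a y with h2 | h2
      · exact Or.inl (by simpa [h2] using h)
      · exact Or.inr (by simp only [List.foldl]; rw [h, h2]; simp)
    · exact Or.inr (by simp only [List.foldl]; simp [h])

theorem le_lmax {l : List ℤ} {x : ℤ} (h : x ∈ l) : x ≤ lmax l := by
  cases l with
  | nil => simp at h
  | cons y ys =>
    rcases List.mem_cons.1 h with h | h
    · subst h; exact le_foldl_max ys x
    · exact mem_le_foldl_max ys y x h

theorem lmax_le {l : List ℤ} {b : ℤ} (hne : l ≠ []) (h : ∀ x ∈ l, x ≤ b) : lmax l ≤ b := by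
  cases l with
  | nil => exact absurd rfl hne
  | cons y ys => exact foldl_max_le ys y b (h y (by simp)) fun x hx => h x (by simp [hx])

theorem lmax_mem {l : List ℤ} (hne : l ≠ []) : lmax l ∈ l := by
  cases l with
  | nil => exact absurd rfl hne
  | cons y ys =>
    rcases foldl_max_mem ys y with h | h
    · rw [lmax, h]; simp
    · rw [lmax]; simp [h]

theorem foldl_min_le : ∀ (l : List ℤ) (a : ℤ), l.foldl min a ≤ a
  | [], _ => le_refl _
  | x :: xs, a => le_trans (foldl_min_le xs (min a x)) (min_le_left a x)

theorem foldl_min_le_mem : ∀ (l : List ℤ) (a x : ℤ), x ∈ l → l.foldl min a ≤ x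
  | [], _, _, h => by simp at h
  | y :: ys, a, x, h => by
    rcases List.mem_cons.1 h with h | h
    · subst h; exact le_trans (foldl_min_le ys (min a x)) (min_le_right a x)
    · exact foldl_min_le_mem ys (min a y) x h

theorem le_foldl_min : ∀ (l : List ℤ) (a b : ℤ), b ≤ a → (∀ x ∈ l, b ≤ x) → b ≤ l.foldl min a
  | [], _, _, ha, _ => ha
  | y :: ys, a, b, ha, h => by
    refine le_foldl_min ys (min a y) b (le_min ha (h y (by simp))) fun x hx => h x (by simp [hx])

theorem foldl_min_mem : ∀ (l : List ℤ) (a : ℤ), l.foldl min a = a ∨ l.foldl min a ∈ l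
  | [], a => Or.inl rfl
  | y :: ys, a => by
    rcases foldl_min_mem ys (min a y) with h | h
    · rcases min_choice a y with h2 | h2
      · exact Or.inl (by simpa [h2] using h)
      · exact Or.inr (by simp only [List.foldl]; rw [h, h2]; simp)
    · exact Or.inr (by simp only [List.foldl]; simp [h])

theorem lmin_le {l : List ℤ} {x : ℤ} (h : x ∈ l) : lmin l ≤ x := by
  cases l with
  | nil => simp at h
  | cons y ys =>
    rcases List.mem_cons.1 h with h | h
    · subst h; exact foldl_min_le ys x
    · exact foldl_min_le_mem ys y x h

theorem le_lmin {l : List ℤ} {b : ℤ} (hne : l ≠ []) (h : ∀ x ∈ l, b ≤ x) : b ≤ lmin l := by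
  cases l with
  | nil => exact absurd rfl hne
  | cons y ys => exact le_foldl_min ys y b (h y (by simp)) fun x hx => h x (by simp [hx])

theorem lmin_mem {l : List ℤ} (hne : l ≠ []) : lmin l ∈ l := by
  cases l with
  | nil => exact absurd rfl hne
  | cons y ys =>
    rcases foldl_min_mem ys y with h | h
    · rw [lmin, h]; simp
    · rw [lmin]; simp [h]

/-! ### out lemmas -/

theorem out_int (m : ℤ) : (int m).out = (m, m) := by rw [out]

theorem Lout_int (m : ℤ) : (int m).Lout = m := by rw [Lout, out_int]
theorem Rout_int (m : ℤ) : (int m).Rout = m := by rw [Rout, out_int]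

theorem out_node (L R : List WT) :
    (node L R).out = (lmax (L.attach.map fun g => (out g.1).2),
      lmin (R.attach.map fun g => (out g.1).1)) := by
  rw [out]; rfl

theorem mem_attach_map_iff {L : List WT} {F : WT → ℤ} {x : ℤ} :
    (x ∈ L.attach.map fun g => F g.1) ↔ ∃ g ∈ L, x = F g := by
  constructor
  · intro h
    rcases List.mem_map.1 h with ⟨⟨g, hg⟩, _, rfl⟩
    exact ⟨g, hg, rfl⟩
  · rintro ⟨g, hg, rfl⟩
    exact List.mem_map.2 ⟨⟨g, hg⟩, List.mem_attach _ _, rfl⟩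

theorem attach_map_ne_nil {L : List WT} (hne : L ≠ []) {F : WT → ℤ} :
    (L.attach.map fun g => F g.1) ≠ [] := by
  cases L with
  | nil => exact absurd rfl hne
  | cons y ys => simp

theorem le_Lout {L R : List WT} {g : WT} (hg : g ∈ L) : g.Rout ≤ (node L R).Lout := by
  rw [Lout, out_node]
  exact le_lmax (mem_attach_map_iff.2 ⟨g, hg, rfl⟩)

theorem Lout_le {L R : List WT} {b : ℤ} (hne : L ≠ []) (h : ∀ g ∈ L, g.Rout ≤ b) :
    (node L R).Lout ≤ b := by
  rw [Lout, out_node]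
  refine lmax_le (attach_map_ne_nil hne (F := fun g => (out g).2)) fun x hx => ?_
  rcases (mem_attach_map_iff (F := fun g => (out g).2)).1 hx with ⟨g, hg, rfl⟩
  exact h g hg

theorem Lout_mem {L R : List WT} (hne : L ≠ []) : ∃ g ∈ L, (node L R).Lout = g.Rout := by
  rw [Lout, out_node]
  have := lmax_mem (l := L.attach.map fun g => (out g.1).2) (attach_map_ne_nil hne (F := fun g => (out g).2))
  rcases (mem_attach_map_iff (F := fun g => (out g).2)).1 this with ⟨g, hg, hE⟩
  exact ⟨g, hg, hE⟩

theorem Rout_le {L R : List WT} {g : WT} (hg : g ∈ R) : (node L R).Rout ≤ g.Lout := by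
  rw [Rout, out_node]
  exact lmin_le (mem_attach_map_iff.2 ⟨g, hg, rfl⟩)

theorem le_Rout {L R : List WT} {b : ℤ} (hne : R ≠ []) (h : ∀ g ∈ R, b ≤ g.Lout) :
    b ≤ (node L R).Rout := by
  rw [Rout, out_node]
  refine le_lmin (attach_map_ne_nil hne (F := fun g => (out g).1)) fun x hx => ?_
  rcases (mem_attach_map_iff (F := fun g => (out g).1)).1 hx with ⟨g, hg, rfl⟩
  exact h g hg

theorem Rout_mem {L R : List WT} (hne : R ≠ []) : ∃ g ∈ R, (node L R).Rout = g.Lout := by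
  rw [Rout, out_node]
  have := lmin_mem (l := R.attach.map fun g => (out g.1).1) (attach_map_ne_nil hne (F := fun g => (out g).1))
  rcases (mem_attach_map_iff (F := fun g => (out g).1)).1 this with ⟨g, hg, hE⟩
  exact ⟨g, hg, hE⟩

end WT
namespace WT

/-! ### IsWT / par lemmas -/

theorem isWT_par {G : WT} {p : Bool} (h : IsWT G p) : G.par = p := by
  induction h with
  | int n => rfl
  | @node L R q hL hR hLp hRp ih _ =>
    cases L with
    | nil => exact absurd rfl hL
    | cons g gs => simpa [par] using congrArg (fun b => !b) (ih g (by simp))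

theorem isWT_unique {G : WT} {p q : Bool} (h1 : IsWT G p) (h2 : IsWT G q) : p = q := by
  rw [← isWT_par h1, ← isWT_par h2]

theorem wt_par {G : WT} (h : Wt G) : IsWT G G.par := by
  rcases h with ⟨p, hp⟩; rwa [isWT_par hp]

theorem isWT_node_shape {G : WT} {q : Bool} (h : IsWT G q) (hi : G.isInt = false) :
    ∃ L R, G = node L R ∧ L ≠ [] ∧ R ≠ [] ∧ (∀ g ∈ L, IsWT g (!q)) ∧ (∀ g ∈ R, IsWT g (!q)) := by
  cases h with
  | int n => simp [isInt] at hi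
  | @node L R p hL hR hLp hRp =>
    refine ⟨L, R, rfl, hL, hR, fun g hg => ?_, fun g hg => ?_⟩
    · simpa using hLp g hg
    · simpa using hRp g hg

theorem isWT_odd_shape {G : WT} (h : IsWT G true) :
    ∃ L R, G = node L R ∧ L ≠ [] ∧ R ≠ [] ∧ (∀ g ∈ L, IsWT g false) ∧ (∀ g ∈ R, IsWT g false) := by
  have hi : G.isInt = false := by
    cases G with
    | int n => have := isWT_par h; simp [par] at this
    | node L R => rfl
  simpa using isWT_node_shape h hi

theorem isWT_mem_lopts {G g : WT} {p : Bool} (h : IsWT G p) (hg : g ∈ G.lopts) :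
    IsWT g (!p) := by
  cases h with
  | int n => simp [lopts] at hg
  | @node L R q hL hR hLp hRp => simpa using hLp g (by simpa [lopts] using hg)

theorem isWT_mem_ropts {G g : WT} {p : Bool} (h : IsWT G p) (hg : g ∈ G.ropts) :
    IsWT g (!p) := by
  cases h with
  | int n => simp [ropts] at hg
  | @node L R q hL hR hLp hRp => simpa using hRp g (by simpa [ropts] using hg)

theorem wt_mem_lopts {G g : WT} (h : Wt G) (hg : g ∈ G.lopts) : Wt g := by
  rcases h with ⟨p, hp⟩; exact ⟨!p, isWT_mem_lopts hp hg⟩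

theorem wt_mem_ropts {G g : WT} (h : Wt G) (hg : g ∈ G.ropts) : Wt g := by
  rcases h with ⟨p, hp⟩; exact ⟨!p, isWT_mem_ropts hp hg⟩

theorem wt_opts_ne_nil {G : WT} (h : Wt G) (hi : G.isInt = false) :
    G.lopts ≠ [] ∧ G.ropts ≠ [] := by
  rcases h with ⟨p, hp⟩
  cases hp with
  | int n => simp [isInt] at hi
  | @node L R q hL hR _ _ => exact ⟨by simpa [lopts] using hL, by simpa [ropts] using hR⟩

theorem isInt_iff {G : WT} : G.isInt = true ↔ ∃ m, G = int m := by
  cases G with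
  | int m => simp [isInt]
  | node L R => simp [isInt]

theorem par_mem_lopts {G g : WT} (h : Wt G) (hg : g ∈ G.lopts) : g.par = !G.par := by
  exact isWT_par (isWT_mem_lopts (wt_par h) hg)

theorem par_mem_ropts {G g : WT} (h : Wt G) (hg : g ∈ G.ropts) : g.par = !G.par := by
  exact isWT_par (isWT_mem_ropts (wt_par h) hg)

theorem odd_not_int {G : WT} (h : Wt G) (hp : G.par = true) : G.isInt = false := by
  cases G with
  | int m =>
    have := isWT_par (h := (wt_par h))
    simp [par] at hp
  | node L R => rfl

/-! ### Subgame lemmas -/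

theorem subgame_trans {A B C : WT} (h1 : Subgame A B) (h2 : Subgame B C) : Subgame A C := by
  revert h1
  induction h2 with
  | refl => exact id
  | left hmem _ ih => exact fun h1 => Subgame.left hmem (ih h1)
  | right hmem _ ih => exact fun h1 => Subgame.right hmem (ih h1)

theorem subgame_of_mem_lopts {G g : WT} (hg : g ∈ G.lopts) : Subgame g G := by
  cases G with
  | int m => simp [lopts] at hg
  | node L R => exact Subgame.left (by simpa [lopts] using hg) (Subgame.refl g)

theorem subgame_of_mem_ropts {G g : WT} (hg : g ∈ G.ropts) : Subgame g G := by
  cases G with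
  | int m => simp [ropts] at hg
  | node L R => exact Subgame.right (by simpa [ropts] using hg) (Subgame.refl g)

/-- Hereditarily the gap-0 condition: every even-tempered subgame H has R(H) ≤ L(H). -/
def Invh (G : WT) : Prop := ∀ H, Subgame H G → IsWT H false → H.Rout ≤ H.Lout

theorem invh_int (m : ℤ) : Invh (int m) := by
  intro H hs _
  have : H = int m := by
    cases hs with
    | refl => rfl
  subst this
  simp [Lout_int, Rout_int]

theorem invh_sub {G H : WT} (h : Invh G) (hs : Subgame H G) : Invh H :=
  fun K hk hke => h K (subgame_trans hk hs) hke

theorem invh_mem_lopts {G g : WT} (h : Invh G) (hg : g ∈ G.lopts) : Invh g :=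
  invh_sub h (subgame_of_mem_lopts hg)

theorem invh_mem_ropts {G g : WT} (h : Invh G) (hg : g ∈ G.ropts) : Invh g :=
  invh_sub h (subgame_of_mem_ropts hg)

theorem invh_self {G : WT} (h : Invh G) (he : IsWT G false) : G.Rout ≤ G.Lout :=
  h G (Subgame.refl G) he

/-! ### Valued lemmas -/

theorem valued_mem_lopts {S : Set ℤ} {G g : WT} (h : Valued S G) (hg : g ∈ G.lopts) :
    Valued S g := by
  cases h with
  | int hm => simp [lopts] at hg
  | node hL hR => exact hL g (by simpa [lopts] using hg)

theorem valued_mem_ropts {S : Set ℤ} {G g : WT} (h : Valued S G) (hg : g ∈ G.ropts) :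
    Valued S g := by
  cases h with
  | int hm => simp [ropts] at hg
  | node hL hR => exact hR g (by simpa [ropts] using hg)

theorem valued_int_mem {S : Set ℤ} {m : ℤ} (h : Valued S (int m)) : m ∈ S := by
  cases h with
  | int hm => exact hm

theorem out_mem_S {S : Set ℤ} : ∀ (G : WT), Valued S G → Wt G → G.Lout ∈ S ∧ G.Rout ∈ S
  | int m, hv, _ => by
    simpa [Lout_int, Rout_int] using valued_int_mem hv
  | node L R, hv, hw => by
    have hne := wt_opts_ne_nil hw (by rfl)
    have hne1 : L ≠ [] := by simpa [lopts] using hne.1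
    have hne2 : R ≠ [] := by simpa [ropts] using hne.2
    constructor
    · rcases Lout_mem (R := R) hne1 with ⟨g, hg, hE⟩
      rw [hE]
      have hg' : g ∈ (node L R).lopts := by simpa [lopts] using hg
      exact (out_mem_S g (valued_mem_lopts hv hg') (wt_mem_lopts hw hg')).2
    · rcases Rout_mem (L := L) hne2 with ⟨g, hg, hE⟩
      rw [hE]
      have hg' : g ∈ (node L R).ropts := by simpa [ropts] using hg
      exact (out_mem_S g (valued_mem_ropts hv hg') (wt_mem_ropts hw hg')).1
termination_by G => sizeOf G
decreasing_by
  · exact sizeOf_lt_of_mem_lopts hg'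
  · exact sizeOf_lt_of_mem_ropts hg'

end WT
namespace WT

variable {n : ℕ}

/-! ### fextn lemmas -/

def allInt (T : Fin n → WT) : Prop := ∀ i, (T i).isInt = true

instance (T : Fin n → WT) : Decidable (allInt T) := by
  unfold allInt; infer_instance

theorem fextn_int {f : (Fin n → ℤ) → ℤ} {T : Fin n → WT} (h : allInt T) :
    fextn f T = int (f fun i => (T i).toInt) := by
  rw [fextn]
  simp only [allInt] at h
  simp [h]

theorem fextn_node {f : (Fin n → ℤ) → ℤ} {T : Fin n → WT} (h : ¬ allInt T) :
    fextn f T = node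
      ((List.finRange n).flatMap fun i =>
        (T i).lopts.attach.map fun g => fextn f (Function.update T i g.1))
      ((List.finRange n).flatMap fun i =>
        (T i).ropts.attach.map fun g => fextn f (Function.update T i g.1)) := by
  rw [fextn]
  simp only [allInt] at h
  simp [h]

theorem mem_lopts_fextn {f : (Fin n → ℤ) → ℤ} {T : Fin n → WT} (h : ¬ allInt T) {x : WT} :
    x ∈ (fextn f T).lopts ↔ ∃ i, ∃ g ∈ (T i).lopts, x = fextn f (Function.update T i g) := by
  rw [fextn_node h]
  simp only [lopts, List.mem_flatMap, List.mem_map]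
  constructor
  · rintro ⟨i, _, ⟨g, hg⟩, _, rfl⟩
    exact ⟨i, g, hg, rfl⟩
  · rintro ⟨i, g, hg, rfl⟩
    exact ⟨i, List.mem_finRange i, ⟨g, hg⟩, List.mem_attach _ _, rfl⟩

theorem mem_ropts_fextn {f : (Fin n → ℤ) → ℤ} {T : Fin n → WT} (h : ¬ allInt T) {x : WT} :
    x ∈ (fextn f T).ropts ↔ ∃ i, ∃ g ∈ (T i).ropts, x = fextn f (Function.update T i g) := by
  rw [fextn_node h]
  simp only [ropts, List.mem_flatMap, List.mem_map]
  constructor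
  · rintro ⟨i, _, ⟨g, hg⟩, _, rfl⟩
    exact ⟨i, g, hg, rfl⟩
  · rintro ⟨i, g, hg, rfl⟩
    exact ⟨i, List.mem_finRange i, ⟨g, hg⟩, List.mem_attach _ _, rfl⟩

theorem exists_live {T : Fin n → WT} (h : ¬ allInt T) : ∃ i, (T i).isInt = false := by
  simp only [allInt, not_forall] at h
  rcases h with ⟨i, hi⟩
  exact ⟨i, by simpa using hi⟩

theorem lopts_fextn_ne_nil {f : (Fin n → ℤ) → ℤ} {T : Fin n → WT}
    (hw : ∀ i, Wt (T i)) (h : ¬ allInt T) : (fextn f T).lopts ≠ [] := by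
  rcases exists_live h with ⟨i, hi⟩
  have hne := (wt_opts_ne_nil (hw i) hi).1
  rcases List.exists_mem_of_ne_nil _ hne with ⟨g, hg⟩
  intro hnil
  have : fextn f (Function.update T i g) ∈ (fextn f T).lopts :=
    (mem_lopts_fextn h).2 ⟨i, g, hg, rfl⟩
  simp [hnil] at this

theorem ropts_fextn_ne_nil {f : (Fin n → ℤ) → ℤ} {T : Fin n → WT}
    (hw : ∀ i, Wt (T i)) (h : ¬ allInt T) : (fextn f T).ropts ≠ [] := by
  rcases exists_live h with ⟨i, hi⟩
  have hne := (wt_opts_ne_nil (hw i) hi).2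
  rcases List.exists_mem_of_ne_nil _ hne with ⟨g, hg⟩
  intro hnil
  have : fextn f (Function.update T i g) ∈ (fextn f T).ropts :=
    (mem_ropts_fextn h).2 ⟨i, g, hg, rfl⟩
  simp [hnil] at this

/-- Upper bound for Lout of fextn via all left options. -/
theorem Lout_fextn_le {f : (Fin n → ℤ) → ℤ} {T : Fin n → WT} {b : ℤ}
    (hw : ∀ i, Wt (T i)) (h : ¬ allInt T)
    (hb : ∀ i, ∀ g ∈ (T i).lopts, (fextn f (Function.update T i g)).Rout ≤ b) :
    (fextn f T).Lout ≤ b := by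
  rw [fextn_node h]
  refine Lout_le (by
    have := lopts_fextn_ne_nil (f := f) hw h
    rwa [fextn_node h] at this) ?_
  intro x hx
  have hx' : x ∈ (fextn f T).lopts := by rw [fextn_node h]; exact hx
  rcases (mem_lopts_fextn h).1 hx' with ⟨i, g, hg, rfl⟩
  exact hb i g hg

theorem le_Lout_fextn {f : (Fin n → ℤ) → ℤ} {T : Fin n → WT} {i : Fin n} {g : WT}
    (h : ¬ allInt T) (hg : g ∈ (T i).lopts) :
    (fextn f (Function.update T i g)).Rout ≤ (fextn f T).Lout := by
  rw [fextn_node h]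
  exact le_Lout (by
    have : fextn f (Function.update T i g) ∈ (fextn f T).lopts :=
      (mem_lopts_fextn h).2 ⟨i, g, hg, rfl⟩
    rw [fextn_node h] at this
    exact this)

theorem Lout_fextn_mem {f : (Fin n → ℤ) → ℤ} {T : Fin n → WT}
    (hw : ∀ i, Wt (T i)) (h : ¬ allInt T) :
    ∃ i, ∃ g ∈ (T i).lopts, (fextn f T).Lout = (fextn f (Function.update T i g)).Rout := by
  have hne : (fextn f T).lopts ≠ [] := lopts_fextn_ne_nil hw h
  rw [fextn_node h] at hne ⊢
  rcases Lout_mem hne with ⟨x, hx, hE⟩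
  have hx' : x ∈ (fextn f T).lopts := by rw [fextn_node h]; exact hx
  rcases (mem_lopts_fextn h).1 hx' with ⟨i, g, hg, rfl⟩
  exact ⟨i, g, hg, hE⟩

theorem le_Rout_fextn {f : (Fin n → ℤ) → ℤ} {T : Fin n → WT} {b : ℤ}
    (hw : ∀ i, Wt (T i)) (h : ¬ allInt T)
    (hb : ∀ i, ∀ g ∈ (T i).ropts, b ≤ (fextn f (Function.update T i g)).Lout) :
    b ≤ (fextn f T).Rout := by
  rw [fextn_node h]
  refine le_Rout (by
    have := ropts_fextn_ne_nil (f := f) hw h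
    rwa [fextn_node h] at this) ?_
  intro x hx
  have hx' : x ∈ (fextn f T).ropts := by rw [fextn_node h]; exact hx
  rcases (mem_ropts_fextn h).1 hx' with ⟨i, g, hg, rfl⟩
  exact hb i g hg

theorem Rout_fextn_le {f : (Fin n → ℤ) → ℤ} {T : Fin n → WT} {i : Fin n} {g : WT}
    (h : ¬ allInt T) (hg : g ∈ (T i).ropts) :
    (fextn f T).Rout ≤ (fextn f (Function.update T i g)).Lout := by
  rw [fextn_node h]
  exact Rout_le (by
    have : fextn f (Function.update T i g) ∈ (fextn f T).ropts :=
      (mem_ropts_fextn h).2 ⟨i, g, hg, rfl⟩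
    rw [fextn_node h] at this
    exact this)

theorem Rout_fextn_mem {f : (Fin n → ℤ) → ℤ} {T : Fin n → WT}
    (hw : ∀ i, Wt (T i)) (h : ¬ allInt T) :
    ∃ i, ∃ g ∈ (T i).ropts, (fextn f T).Rout = (fextn f (Function.update T i g)).Lout := by
  have hne : (fextn f T).ropts ≠ [] := ropts_fextn_ne_nil hw h
  rw [fextn_node h] at hne ⊢
  rcases Rout_mem hne with ⟨x, hx, hE⟩
  have hx' : x ∈ (fextn f T).ropts := by rw [fextn_node h]; exact hx
  rcases (mem_ropts_fextn h).1 hx' with ⟨i, g, hg, rfl⟩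
  exact ⟨i, g, hg, hE⟩

end WT
namespace WT

variable {n : ℕ}

/-! ### parity bookkeeping -/

/-- 1 if odd-tempered, 0 if even-tempered. -/
def pn (G : WT) : ℕ := if G.par then 1 else 0

/-- Total parity count of a tuple. -/
def tsum (T : Fin n → WT) : ℕ := ∑ i, pn (T i)

/-- Parity count of all components except `j`. -/
def esum (T : Fin n → WT) (j : Fin n) : ℕ := ∑ i ∈ Finset.univ.erase j, pn (T i)

theorem forall_update {P : Fin n → WT → Prop} {T : Fin n → WT} {i : Fin n} {g : WT}
    (h : ∀ k, P k (T k)) (hg : P i g) : ∀ k, P k (Function.update T i g k) := by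
  intro k
  rw [Function.update_apply]
  split_ifs with hk
  · subst hk; exact hg
  · exact h k

theorem tsum_eq (T : Fin n → WT) (j : Fin n) : tsum T = pn (T j) + esum T j :=
  (Finset.add_sum_erase _ (fun i => pn (T i)) (Finset.mem_univ j)).symm

theorem esum_update_self (T : Fin n → WT) (j : Fin n) (X : WT) :
    esum (Function.update T j X) j = esum T j := by
  refine Finset.sum_congr rfl fun i hi => ?_
  rw [Function.update_of_ne (Finset.ne_of_mem_erase hi)]

theorem tsum_update (T : Fin n → WT) (j : Fin n) (X : WT) :
    tsum (Function.update T j X) = pn X + esum T j := by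
  rw [tsum_eq _ j, Function.update_self, esum_update_self]

theorem esum_update_flip {T : Fin n → WT} {i j : Fin n} (hij : i ≠ j) {g : WT}
    (hpar : g.par = !(T i).par) :
    esum (Function.update T i g) j % 2 = (esum T j + 1) % 2 := by
  have hmem : i ∈ Finset.univ.erase j := Finset.mem_erase.2 ⟨hij, Finset.mem_univ i⟩
  have h1 : esum (Function.update T i g) j
      = pn g + ∑ k ∈ (Finset.univ.erase j).erase i, pn (T k) := by
    have hpt : ∀ k, pn (Function.update T i g k)
        = Function.update (fun k => pn (T k)) i (pn g) k := by
      intro k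
      rw [Function.update_apply, Function.update_apply]
      split_ifs <;> rfl
    calc esum (Function.update T i g) j
        = ∑ k ∈ Finset.univ.erase j, Function.update (fun k => pn (T k)) i (pn g) k :=
          Finset.sum_congr rfl fun k _ => hpt k
      _ = pn g + ∑ k ∈ Finset.univ.erase j \ {i}, pn (T k) :=
          Finset.sum_update_of_mem hmem _ _
      _ = pn g + ∑ k ∈ (Finset.univ.erase j).erase i, pn (T k) := by
          rw [Finset.erase_eq (Finset.univ.erase j) i]
  have h2 : esum T j = pn (T i) + ∑ k ∈ (Finset.univ.erase j).erase i, pn (T k) :=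
    (Finset.add_sum_erase _ _ hmem).symm
  have h3 : pn g + pn (T i) = 1 := by
    rw [pn, pn, hpar]
    cases (T i).par <;> simp
  omega

/-! ### well-temperedness of fextn -/

theorem isWT_int' (m : ℤ) : Wt (int m) := ⟨false, IsWT.int m⟩

theorem pn_int (m : ℤ) : pn (int m) = 0 := by simp [pn, par]

theorem pn_isInt {G : WT} (h : G.isInt = true) : pn G = 0 := by
  rcases isInt_iff.1 h with ⟨m, rfl⟩; exact pn_int m

theorem isWT_fextn {f : (Fin n → ℤ) → ℤ} :
    ∀ (T : Fin n → WT), (∀ i, Wt (T i)) → IsWT (fextn f T) (tsum T % 2 == 1) := by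
  intro T0 hw0
  generalize hT0 : tupSize T0 = s
  revert T0
  induction s using Nat.strong_induction_on with
  | _ s ih =>
  intro T hw hTs
  by_cases hA : allInt T
  · have h0 : tsum T = 0 := Finset.sum_eq_zero fun i _ => pn_isInt (hA i)
    rw [fextn_int hA, h0]
    exact IsWT.int _
  · have key : ∀ i, ∀ g, (g ∈ (T i).lopts ∨ g ∈ (T i).ropts) →
        IsWT (fextn f (Function.update T i g)) (!(tsum T % 2 == 1)) := by
      intro i g hg
      have hpar : g.par = !(T i).par := by
        rcases hg with hg | hg
        · exact par_mem_lopts (hw i) hg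
        · exact par_mem_ropts (hw i) hg
      have hts : tsum (Function.update T i g) % 2 = (tsum T + 1) % 2 := by
        rw [tsum_update, tsum_eq T i]
        have h3 : pn g + pn (T i) = 1 := by
          rw [pn, pn, hpar]; cases (T i).par <;> simp
        omega
      have hsz : tupSize (Function.update T i g) < tupSize T := by
        rcases hg with hg | hg
        · exact tupSize_update_lt T i g (sizeOf_lt_of_mem_lopts hg)
        · exact tupSize_update_lt T i g (sizeOf_lt_of_mem_ropts hg)
      have hw' : ∀ k, Wt (Function.update T i g k) := by
        refine forall_update hw ?_
        rcases hg with hg | hg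
        · exact wt_mem_lopts (hw i) hg
        · exact wt_mem_ropts (hw i) hg
      have := ih _ (by rw [← hTs]; exact hsz) _ hw' rfl
      rw [hts] at this
      have hb : ((tsum T + 1) % 2 == 1) = !(tsum T % 2 == 1) := by
        rcases Nat.mod_two_eq_zero_or_one (tsum T) with h | h <;> simp [Nat.add_mod, h]
      rwa [hb] at this
    rw [fextn_node hA]
    have hcon : (!(!(tsum T % 2 == 1))) = (tsum T % 2 == 1) := Bool.not_not _
    rw [← hcon]
    refine IsWT.node ?_ ?_ ?_ ?_
    · have := lopts_fextn_ne_nil (f := f) hw hA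
      rwa [fextn_node hA] at this
    · have := ropts_fextn_ne_nil (f := f) hw hA
      rwa [fextn_node hA] at this
    · intro g hg
      have hg' : g ∈ (fextn f T).lopts := by rw [fextn_node hA]; exact hg
      rcases (mem_lopts_fextn hA).1 hg' with ⟨i, g0, hg0, rfl⟩
      exact key i g0 (Or.inl hg0)
    · intro g hg
      have hg' : g ∈ (fextn f T).ropts := by rw [fextn_node hA]; exact hg
      rcases (mem_ropts_fextn hA).1 hg' with ⟨i, g0, hg0, rfl⟩
      exact key i g0 (Or.inr hg0)

theorem wt_fextn {f : (Fin n → ℤ) → ℤ} {T : Fin n → WT} (hw : ∀ i, Wt (T i)) :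
    Wt (fextn f T) := ⟨_, isWT_fextn T hw⟩

theorem tsum_even_of_isWT_false {f : (Fin n → ℤ) → ℤ} {T : Fin n → WT}
    (hw : ∀ i, Wt (T i)) (h : IsWT (fextn f T) false) : tsum T % 2 = 0 := by
  have h2 := isWT_fextn (f := f) T hw
  have := isWT_unique h2 h
  rcases Nat.mod_two_eq_zero_or_one (tsum T) with hm | hm
  · exact hm
  · rw [hm] at this; simp at this

/-! ### subgames of fextn -/

theorem subgame_fextn {f : (Fin n → ℤ) → ℤ} {K X : WT} (hs : Subgame K X) :
    ∀ (T : Fin n → WT), X = fextn f T →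
      ∃ U : Fin n → WT, (∀ i, Subgame (U i) (T i)) ∧ K = fextn f U := by
  induction hs with
  | refl => exact fun T hT => ⟨T, fun i => Subgame.refl _, hT⟩
  | @left G' L R hmem hsub ih =>
    intro T hT
    by_cases hA : allInt T
    · rw [fextn_int hA] at hT; exact absurd hT (by simp)
    · have hG' : G' ∈ (fextn f T).lopts := by
        rw [← hT]; simpa [lopts] using hmem
      rcases (mem_lopts_fextn hA).1 hG' with ⟨i, g, hg, rfl⟩
      rcases ih _ rfl with ⟨U, hU, hK⟩
      refine ⟨U, fun k => ?_, hK⟩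
      by_cases hk : k = i
      · subst hk
        have := hU k
        rw [Function.update_self] at this
        exact subgame_trans this (subgame_of_mem_lopts hg)
      · have := hU k
        rwa [Function.update_of_ne hk] at this
  | @right G' L R hmem hsub ih =>
    intro T hT
    by_cases hA : allInt T
    · rw [fextn_int hA] at hT; exact absurd hT (by simp)
    · have hG' : G' ∈ (fextn f T).ropts := by
        rw [← hT]; simpa [ropts] using hmem
      rcases (mem_ropts_fextn hA).1 hG' with ⟨i, g, hg, rfl⟩
      rcases ih _ rfl with ⟨U, hU, hK⟩
      refine ⟨U, fun k => ?_, hK⟩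
      by_cases hk : k = i
      · subst hk
        have := hU k
        rw [Function.update_self] at this
        exact subgame_trans this (subgame_of_mem_ropts hg)
      · have := hU k
        rwa [Function.update_of_ne hk] at this

/-- Every fextn of well-tempered games has an integer subgame. -/
theorem exists_int_subgame {f : (Fin n → ℤ) → ℤ} :
    ∀ (T : Fin n → WT), (∀ i, Wt (T i)) → ∃ m : ℤ, Subgame (int m) (fextn f T) := by
  intro T0 hw0
  generalize hT0 : tupSize T0 = s
  revert T0
  induction s using Nat.strong_induction_on with
  | _ s ih =>
  intro T hw hTs
  by_cases hA : allInt T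
  · exact ⟨_, by rw [fextn_int hA]; exact Subgame.refl _⟩
  · rcases exists_live hA with ⟨i, hi⟩
    have hne := (wt_opts_ne_nil (hw i) hi).1
    rcases List.exists_mem_of_ne_nil _ hne with ⟨g, hg⟩
    have hw' : ∀ k, Wt (Function.update T i g k) :=
      forall_update hw (wt_mem_lopts (hw i) hg)
    have hsz := tupSize_update_lt T i g (sizeOf_lt_of_mem_lopts hg)
    rcases ih _ (by rw [← hTs]; exact hsz) _ hw' rfl with ⟨m, hm⟩
    refine ⟨m, ?_⟩
    have hmem : fextn f (Function.update T i g) ∈ (fextn f T).lopts :=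
      (mem_lopts_fextn hA).2 ⟨i, g, hg, rfl⟩
    exact subgame_trans hm (subgame_of_mem_lopts hmem)

end WT
namespace WT

/- The tempo relations. -/

mutual
inductive RV1 : WT → ℤ → Prop where
  | mk {L R : List WT} {c : ℤ} (h : ∀ r ∈ R, RVE r c) : RV1 (node L R) c
inductive RVE : WT → ℤ → Prop where
  | int {d c : ℤ} (h : c ≤ d) : RVE (int d) c
  | node {L R : List WT} {c : ℤ} {l : WT} (hl : l ∈ L) (h : RV1 l c) : RVE (node L R) c
end

mutual
inductive RVEp : WT → ℤ → Prop where
  | int {d c : ℤ} (h : c ≤ d) : RVEp (int d) c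
  | node {L R : List WT} {c : ℤ} (h1 : ∀ r ∈ R, RVO r c) {l : WT} (hl : l ∈ L)
      (h2 : RV1 l c) : RVEp (node L R) c
inductive RVO : WT → ℤ → Prop where
  | mk {L R : List WT} {c : ℤ} {l : WT} (hl : l ∈ L) (h : RVEp l c) : RVO (node L R) c
end

mutual
inductive SEo : WT → ℤ → Prop where
  | mk {L R : List WT} {c : ℤ} (h : ∀ l ∈ L, SOo l c) : SEo (node L R) c
inductive SOo : WT → ℤ → Prop where
  | int {d c : ℤ} (h : d ≤ c) : SOo (int d) c
  | node {L R : List WT} {c : ℤ} {r : WT} (hr : r ∈ R) (h : SEo r c) : SOo (node L R) c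
end

mutual
inductive SE : WT → ℤ → Prop where
  | int {d c : ℤ} (h : d ≤ c) : SE (int d) c
  | node {L R : List WT} {c : ℤ} (h1 : ∀ l ∈ L, SO l c) {r : WT} (hr : r ∈ R)
      (h2 : SEo r c) : SE (node L R) c
inductive SO : WT → ℤ → Prop where
  | mk {L R : List WT} {c : ℤ} {r : WT} (hr : r ∈ R) (h : SE r c) : SO (node L R) c
end

/- value lemmas for the relations -/

theorem rv_val : ∀ (G : WT) (c : ℤ),
    (RV1 G c → Wt G → c ≤ G.Rout) ∧ (RVE G c → Wt G → c ≤ G.Lout) := by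
  intro G0
  generalize hs0 : sizeOf G0 = s
  revert G0
  induction s using Nat.strong_induction_on with
  | _ s ih =>
  intro G hGs c
  constructor
  · intro h hw
    cases h with
    | @mk L R c h =>
      have hne : R ≠ [] := by simpa [ropts] using (wt_opts_ne_nil hw rfl).2
      refine le_Rout hne fun g hg => ?_
      have hg' : g ∈ (node L R).ropts := by simpa [ropts] using hg
      exact (ih _ (by rw [← hGs]; exact sizeOf_lt_of_mem_ropts hg') g rfl c).2
        (h g hg) (wt_mem_ropts hw hg')
  · intro h hw
    cases h with
    | int h => rwa [Lout_int]
    | @node L R c l hl h =>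
      have hl' : l ∈ (node L R).lopts := by simpa [lopts] using hl
      refine le_trans ((ih _ (by rw [← hGs]; exact sizeOf_lt_of_mem_lopts hl') l rfl c).1
        h (wt_mem_lopts hw hl')) (le_Lout hl)

theorem rv1_val {C : WT} {c : ℤ} (h : RV1 C c) (hw : Wt C) : c ≤ C.Rout :=
  (rv_val C c).1 h hw
theorem rve_val {D : WT} {c : ℤ} (h : RVE D c) (hw : Wt D) : c ≤ D.Lout :=
  (rv_val D c).2 h hw

theorem rvp_val : ∀ (G : WT) (c : ℤ),
    (RVEp G c → Wt G → c ≤ G.Rout) ∧ (RVO G c → Wt G → c ≤ G.Lout) := by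
  intro G0
  generalize hs0 : sizeOf G0 = s
  revert G0
  induction s using Nat.strong_induction_on with
  | _ s ih =>
  intro G hGs c
  constructor
  · intro h hw
    cases h with
    | int h => rwa [Rout_int]
    | @node L R c h1 l hl h2 =>
      have hne : R ≠ [] := by simpa [ropts] using (wt_opts_ne_nil hw rfl).2
      refine le_Rout hne fun g hg => ?_
      have hg' : g ∈ (node L R).ropts := by simpa [ropts] using hg
      exact (ih _ (by rw [← hGs]; exact sizeOf_lt_of_mem_ropts hg') g rfl c).2
        (h1 g hg) (wt_mem_ropts hw hg')
  · intro h hw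
    cases h with
    | @mk L R c l hl h =>
      have hl' : l ∈ (node L R).lopts := by simpa [lopts] using hl
      refine le_trans ((ih _ (by rw [← hGs]; exact sizeOf_lt_of_mem_lopts hl') l rfl c).1
        h (wt_mem_lopts hw hl')) (le_Lout hl)

theorem rvep_valR {D : WT} {c : ℤ} (h : RVEp D c) (hw : Wt D) : c ≤ D.Rout :=
  (rvp_val D c).1 h hw
theorem rvo_val {W : WT} {c : ℤ} (h : RVO W c) (hw : Wt W) : c ≤ W.Lout :=
  (rvp_val W c).2 h hw

theorem rvep_valL {D : WT} {c : ℤ} (h : RVEp D c) (hw : Wt D) : c ≤ D.Lout := by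
  cases h with
  | int h => rwa [Lout_int]
  | @node L R c h1 l hl h2 =>
    exact le_trans (rv1_val h2 (wt_mem_lopts hw (by simpa [lopts] using hl))) (le_Lout hl)

theorem seo_val : ∀ (G : WT) (c : ℤ),
    (SEo G c → Wt G → G.Lout ≤ c) ∧ (SOo G c → Wt G → G.Rout ≤ c) := by
  intro G0
  generalize hs0 : sizeOf G0 = s
  revert G0
  induction s using Nat.strong_induction_on with
  | _ s ih =>
  intro G hGs c
  constructor
  · intro h hw
    cases h with
    | @mk L R c h =>
      have hne : L ≠ [] := by simpa [lopts] using (wt_opts_ne_nil hw rfl).1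
      refine Lout_le hne fun g hg => ?_
      have hg' : g ∈ (node L R).lopts := by simpa [lopts] using hg
      exact (ih _ (by rw [← hGs]; exact sizeOf_lt_of_mem_lopts hg') g rfl c).2
        (h g hg) (wt_mem_lopts hw hg')
  · intro h hw
    cases h with
    | int h => rwa [Rout_int]
    | @node L R c r hr h =>
      have hr' : r ∈ (node L R).ropts := by simpa [ropts] using hr
      exact le_trans (Rout_le hr)
        ((ih _ (by rw [← hGs]; exact sizeOf_lt_of_mem_ropts hr') r rfl c).1
          h (wt_mem_ropts hw hr'))

theorem seo_valL {X : WT} {c : ℤ} (h : SEo X c) (hw : Wt X) : X.Lout ≤ c :=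
  (seo_val X c).1 h hw
theorem soo_valR {V : WT} {c : ℤ} (h : SOo V c) (hw : Wt V) : V.Rout ≤ c :=
  (seo_val V c).2 h hw

theorem se_val : ∀ (G : WT) (c : ℤ),
    (SE G c → Wt G → G.Lout ≤ c) ∧ (SO G c → Wt G → G.Rout ≤ c) := by
  intro G0
  generalize hs0 : sizeOf G0 = s
  revert G0
  induction s using Nat.strong_induction_on with
  | _ s ih =>
  intro G hGs c
  constructor
  · intro h hw
    cases h with
    | int h => rwa [Lout_int]
    | @node L R c h1 r hr h2 =>
      have hne : L ≠ [] := by simpa [lopts] using (wt_opts_ne_nil hw rfl).1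
      refine Lout_le hne fun g hg => ?_
      have hg' : g ∈ (node L R).lopts := by simpa [lopts] using hg
      exact (ih _ (by rw [← hGs]; exact sizeOf_lt_of_mem_lopts hg') g rfl c).2
        (h1 g hg) (wt_mem_lopts hw hg')
  · intro h hw
    cases h with
    | @mk L R c r hr h =>
      have hr' : r ∈ (node L R).ropts := by simpa [ropts] using hr
      exact le_trans (Rout_le hr)
        ((ih _ (by rw [← hGs]; exact sizeOf_lt_of_mem_ropts hr') r rfl c).1
          h (wt_mem_ropts hw hr'))

theorem se_valL {Y : WT} {c : ℤ} (h : SE Y c) (hw : Wt Y) : Y.Lout ≤ c :=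
  (se_val Y c).1 h hw
theorem so_valR {W : WT} {c : ℤ} (h : SO W c) (hw : Wt W) : W.Rout ≤ c :=
  (se_val W c).2 h hw

theorem se_valR {Y : WT} {c : ℤ} (h : SE Y c) (hw : Wt Y) : Y.Rout ≤ c := by
  cases h with
  | int h => rwa [Rout_int]
  | @node L R c h1 r hr h2 =>
    exact le_trans (Rout_le hr) (seo_valL h2 (wt_mem_ropts hw (by simpa [ropts] using hr)))

/- establishment lemmas -/

theorem wW : ∀ (G : WT) (c : ℤ),
    (Wt G → IsWT G false → c ≤ G.Lout → RVE G c) ∧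
    (Wt G → IsWT G true → c ≤ G.Rout → RV1 G c) := by
  intro G0
  generalize hs0 : sizeOf G0 = s
  revert G0
  induction s using Nat.strong_induction_on with
  | _ s ih =>
  intro G hGs c
  constructor
  · intro hw he h
    cases G with
    | int d => exact RVE.int (by rwa [Lout_int] at h)
    | node L R =>
      have hne : L ≠ [] := by simpa [lopts] using (wt_opts_ne_nil hw rfl).1
      rcases Lout_mem (R := R) hne with ⟨l, hl, hE⟩
      have hl' : l ∈ (node L R).lopts := by simpa [lopts] using hl
      exact RVE.node hl ((ih _ (by rw [← hGs]; exact sizeOf_lt_of_mem_lopts hl') l rfl c).2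
        (wt_mem_lopts hw hl') (by simpa using isWT_mem_lopts he hl') (by rw [← hE]; exact h))
  · intro hw ho h
    cases G with
    | int d => exact absurd (isWT_par ho) (by simp [par])
    | node L R =>
      refine RV1.mk fun r hr => ?_
      have hr' : r ∈ (node L R).ropts := by simpa [ropts] using hr
      exact (ih _ (by rw [← hGs]; exact sizeOf_lt_of_mem_ropts hr') r rfl c).1
        (wt_mem_ropts hw hr') (by simpa using isWT_mem_ropts ho hr') (le_trans h (Rout_le hr))

theorem wWL {D : WT} {c : ℤ} (hw : Wt D) (he : IsWT D false) (h : c ≤ D.Lout) : RVE D c :=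
  (wW D c).1 hw he h
theorem wWR {C : WT} {c : ℤ} (hw : Wt C) (ho : IsWT C true) (h : c ≤ C.Rout) : RV1 C c :=
  (wW C c).2 hw ho h

theorem wp : ∀ (G : WT) (c : ℤ),
    (Wt G → Invh G → IsWT G false → c ≤ G.Rout → RVEp G c) ∧
    (Wt G → Invh G → IsWT G true → c ≤ G.Lout → RVO G c) := by
  intro G0
  generalize hs0 : sizeOf G0 = s
  revert G0
  induction s using Nat.strong_induction_on with
  | _ s ih =>
  intro G hGs c
  constructor
  · intro hw hI he h
    cases G with
    | int d => exact RVEp.int (by rwa [Rout_int] at h)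
    | node L R =>
      have hne : L ≠ [] := by simpa [lopts] using (wt_opts_ne_nil hw rfl).1
      have hLout : c ≤ (node L R).Lout := le_trans h (invh_self hI he)
      rcases Lout_mem (R := R) hne with ⟨l, hl, hE⟩
      have hl' : l ∈ (node L R).lopts := by simpa [lopts] using hl
      refine RVEp.node (fun r hr => ?_) hl
        (wWR (wt_mem_lopts hw hl') (by simpa using isWT_mem_lopts he hl')
          (by rw [← hE]; exact hLout))
      have hr' : r ∈ (node L R).ropts := by simpa [ropts] using hr
      exact (ih _ (by rw [← hGs]; exact sizeOf_lt_of_mem_ropts hr') r rfl c).2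
        (wt_mem_ropts hw hr') (invh_mem_ropts hI hr')
        (by simpa using isWT_mem_ropts he hr') (le_trans h (Rout_le hr))
  · intro hw hI ho h
    cases G with
    | int d => exact absurd (isWT_par ho) (by simp [par])
    | node L R =>
      have hne : L ≠ [] := by simpa [lopts] using (wt_opts_ne_nil hw rfl).1
      rcases Lout_mem (R := R) hne with ⟨l, hl, hE⟩
      have hl' : l ∈ (node L R).lopts := by simpa [lopts] using hl
      exact RVO.mk hl ((ih _ (by rw [← hGs]; exact sizeOf_lt_of_mem_lopts hl') l rfl c).1
        (wt_mem_lopts hw hl') (invh_mem_lopts hI hl')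
        (by simpa using isWT_mem_lopts ho hl') (by rw [← hE]; exact h))

theorem wpE {D : WT} {c : ℤ} (hw : Wt D) (hI : Invh D) (he : IsWT D false)
    (h : c ≤ D.Rout) : RVEp D c := (wp D c).1 hw hI he h

theorem dWo : ∀ (G : WT) (c : ℤ),
    (Wt G → IsWT G true → G.Lout ≤ c → SEo G c) ∧
    (Wt G → IsWT G false → G.Rout ≤ c → SOo G c) := by
  intro G0
  generalize hs0 : sizeOf G0 = s
  revert G0
  induction s using Nat.strong_induction_on with
  | _ s ih =>
  intro G hGs c
  constructor
  · intro hw ho h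
    cases G with
    | int d => exact absurd (isWT_par ho) (by simp [par])
    | node L R =>
      refine SEo.mk fun l hl => ?_
      have hl' : l ∈ (node L R).lopts := by simpa [lopts] using hl
      exact (ih _ (by rw [← hGs]; exact sizeOf_lt_of_mem_lopts hl') l rfl c).2
        (wt_mem_lopts hw hl') (by simpa using isWT_mem_lopts ho hl')
        (le_trans (le_Lout hl) h)
  · intro hw he h
    cases G with
    | int d => exact SOo.int (by rwa [Rout_int] at h)
    | node L R =>
      have hne : R ≠ [] := by simpa [ropts] using (wt_opts_ne_nil hw rfl).2
      rcases Rout_mem (L := L) hne with ⟨r, hr, hE⟩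
      have hr' : r ∈ (node L R).ropts := by simpa [ropts] using hr
      exact SOo.node hr ((ih _ (by rw [← hGs]; exact sizeOf_lt_of_mem_ropts hr') r rfl c).1
        (wt_mem_ropts hw hr') (by simpa using isWT_mem_ropts he hr') (by rw [← hE]; exact h))

theorem dWo1 {X : WT} {c : ℤ} (hw : Wt X) (ho : IsWT X true) (h : X.Lout ≤ c) : SEo X c :=
  (dWo X c).1 hw ho h

theorem dW : ∀ (G : WT) (c : ℤ),
    (Wt G → Invh G → IsWT G false → G.Lout ≤ c → SE G c) ∧
    (Wt G → Invh G → IsWT G true → G.Rout ≤ c → SO G c) := by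
  intro G0
  generalize hs0 : sizeOf G0 = s
  revert G0
  induction s using Nat.strong_induction_on with
  | _ s ih =>
  intro G hGs c
  constructor
  · intro hw hI he h
    cases G with
    | int d => exact SE.int (by rwa [Lout_int] at h)
    | node L R =>
      have hne : R ≠ [] := by simpa [ropts] using (wt_opts_ne_nil hw rfl).2
      have hRout : (node L R).Rout ≤ c := le_trans (invh_self hI he) h
      rcases Rout_mem (L := L) hne with ⟨r, hr, hE⟩
      have hr' : r ∈ (node L R).ropts := by simpa [ropts] using hr
      refine SE.node (fun l hl => ?_) hr
        (dWo1 (wt_mem_ropts hw hr') (by simpa using isWT_mem_ropts he hr')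
          (by rw [← hE]; exact hRout))
      have hl' : l ∈ (node L R).lopts := by simpa [lopts] using hl
      exact (ih _ (by rw [← hGs]; exact sizeOf_lt_of_mem_lopts hl') l rfl c).2
        (wt_mem_lopts hw hl') (invh_mem_lopts hI hl')
        (by simpa using isWT_mem_lopts he hl') (le_trans (le_Lout hl) h)
  · intro hw hI ho h
    cases G with
    | int d => exact absurd (isWT_par ho) (by simp [par])
    | node L R =>
      have hne : R ≠ [] := by simpa [ropts] using (wt_opts_ne_nil hw rfl).2
      rcases Rout_mem (L := L) hne with ⟨r, hr, hE⟩
      have hr' : r ∈ (node L R).ropts := by simpa [ropts] using hr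
      exact SO.mk hr ((ih _ (by rw [← hGs]; exact sizeOf_lt_of_mem_ropts hr') r rfl c).1
        (wt_mem_ropts hw hr') (invh_mem_ropts hI hr')
        (by simpa using isWT_mem_ropts ho hr') (by rw [← hE]; exact h))

theorem dWe {Y : WT} {c : ℤ} (hw : Wt Y) (hI : Invh Y) (he : IsWT Y false)
    (h : Y.Lout ≤ c) : SE Y c := (dW Y c).1 hw hI he h

end WT
namespace WT

variable {n : ℕ} {S : Fin n → Set ℤ} {f : (Fin n → ℤ) → ℤ}

theorem toInt_mem {Sj : Set ℤ} {G : WT} (hv : Valued Sj G) (hi : G.isInt = true) :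
    G.toInt ∈ Sj := by
  rcases isInt_iff.1 hi with ⟨m, rfl⟩
  exact valued_int_mem hv

theorem update_vec_mem {T : Fin n → WT} {j : Fin n} {x : ℤ}
    (hv : ∀ i, i ≠ j → Valued (S i) (T i)) (hint : ∀ i, i ≠ j → (T i).isInt = true)
    (hx : x ∈ S j) : ∀ i, Function.update (fun i => (T i).toInt) j x i ∈ S i := by
  intro i
  rw [Function.update_apply]
  split_ifs with hij
  · subst hij; exact hx
  · exact toInt_mem (hv i hij) (hint i hij)

/-- Monotone replacement of an integer component. -/
theorem mi (hf : ∀ x y : Fin n → ℤ, (∀ i, x i ∈ S i) → (∀ i, y i ∈ S i) →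
      (∀ i, x i ≤ y i) → f x ≤ f y) :
    ∀ (T : Fin n → WT) (j : Fin n) (d c : ℤ),
    T j = int d →
    (∀ i, Wt (T i)) → (∀ i, Valued (S i) (T i)) →
    c ∈ S j → c ≤ d →
    (fextn f (Function.update T j (int c))).Lout ≤ (fextn f T).Lout ∧
    (fextn f (Function.update T j (int c))).Rout ≤ (fextn f T).Rout := by
  intro T0 j0 d0 c0 h1 h2 h3 h4 h5
  generalize hs0 : tupSize T0 = s
  revert T0 j0 d0 c0
  induction s using Nat.strong_induction_on with
  | _ s ih =>
  intro T j d c hTj hw hv hcS hcd hTs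
  have hdS : d ∈ S j := by
    have := hv j; rw [hTj] at this; exact valued_int_mem this
  have hwV : ∀ i, Wt (Function.update T j (int c) i) := forall_update hw (isWT_int' c)
  have hvV : ∀ i, Valued (S i) (Function.update T j (int c) i) :=
    forall_update hv (Valued.int hcS)
  by_cases hA : allInt T
  · have hAV : allInt (Function.update T j (int c)) := by
      intro i
      rw [Function.update_apply]
      split_ifs with hij
      · rfl
      · exact hA i
    rw [fextn_int hA, fextn_int hAV]
    have hle : f (fun i => (Function.update T j (int c) i).toInt) ≤ f (fun i => (T i).toInt) := by
      refine hf _ _ (fun i => ?_) (fun i => toInt_mem (hv i) (hA i)) (fun i => ?_)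
      · exact toInt_mem (hvV i) (hAV i)
      · rw [Function.update_apply]
        split_ifs with hij
        · subst hij; rw [hTj]; simpa [toInt] using hcd
        · exact le_refl _
    exact ⟨by rw [Lout_int, Lout_int]; exact hle, by rw [Rout_int, Rout_int]; exact hle⟩
  · have hAV : ¬ allInt (Function.update T j (int c)) := by
      intro hAll
      refine hA fun i => ?_
      by_cases hij : i = j
      · subst hij; rw [hTj]; rfl
      · have := hAll i; rwa [Function.update_of_ne hij] at this
    constructor
    · refine Lout_fextn_le hwV hAV fun i g hg => ?_
      have hij : i ≠ j := by
        intro hij; subst hij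
        rw [Function.update_self] at hg; simp [lopts] at hg
      rw [Function.update_of_ne hij] at hg
      have hcomm : Function.update (Function.update T j (int c)) i g
          = Function.update (Function.update T i g) j (int c) :=
        Function.update_comm hij.symm _ _ _
      rw [hcomm]
      have hTj' : (Function.update T i g) j = int d := by
        rw [Function.update_of_ne (Ne.symm hij)]; exact hTj
      have hsz : tupSize (Function.update T i g) < s := by
        rw [← hTs]; exact tupSize_update_lt T i g (sizeOf_lt_of_mem_lopts hg)
      have hIH := ih _ hsz (Function.update T i g) j d c hTj'
        (forall_update hw (wt_mem_lopts (hw i) hg))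
        (forall_update hv (valued_mem_lopts (hv i) hg)) hcS hcd rfl
      exact le_trans hIH.2 (le_Lout_fextn hA hg)
    · rcases Rout_fextn_mem hw hA with ⟨i, g, hg, hE⟩
      have hij : i ≠ j := by
        intro hij; subst hij
        rw [hTj] at hg; simp [ropts] at hg
      have hg' : g ∈ (Function.update T j (int c) i).ropts := by
        rw [Function.update_of_ne hij]; exact hg
      refine le_trans (Rout_fextn_le hAV hg') ?_
      have hcomm : Function.update (Function.update T j (int c)) i g
          = Function.update (Function.update T i g) j (int c) :=
        Function.update_comm hij.symm _ _ _
      rw [hcomm, hE]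
      have hTj' : (Function.update T i g) j = int d := by
        rw [Function.update_of_ne (Ne.symm hij)]; exact hTj
      have hsz : tupSize (Function.update T i g) < s := by
        rw [← hTs]; exact tupSize_update_lt T i g (sizeOf_lt_of_mem_ropts hg)
      exact (ih _ hsz (Function.update T i g) j d c hTj'
        (forall_update hw (wt_mem_ropts (hw i) hg))
        (forall_update hv (valued_mem_ropts (hv i) hg)) hcS hcd rfl).1

/-- Endgame: when all components except `j` are integers. -/
theorem eg (hf : ∀ x y : Fin n → ℤ, (∀ i, x i ∈ S i) → (∀ i, y i ∈ S i) →
      (∀ i, x i ≤ y i) → f x ≤ f y) :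
    ∀ (T : Fin n → WT) (j : Fin n),
    (∀ i, i ≠ j → (T i).isInt = true) →
    (∀ i, Wt (T i)) → (∀ i, Valued (S i) (T i)) →
    (fextn f T).Lout = f (Function.update (fun i => (T i).toInt) j (T j).Lout) ∧
    (fextn f T).Rout = f (Function.update (fun i => (T i).toInt) j (T j).Rout) := by
  intro T0 j0 h1 h2 h3
  generalize hs0 : sizeOf (T0 j0) = s
  revert T0 j0
  induction s using Nat.strong_induction_on with
  | _ s ih =>
  intro T j hdead hw hv hTs
  by_cases hA : allInt T
  · rw [fextn_int hA, Lout_int, Rout_int]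
    constructor
    · congr 1
      have hLj : (T j).Lout = (fun i => (T i).toInt) j := by
        rcases isInt_iff.1 (hA j) with ⟨m, hm⟩
        simp [hm, Lout_int, toInt]
      rw [hLj, Function.update_eq_self]
    · congr 1
      have hRj : (T j).Rout = (fun i => (T i).toInt) j := by
        rcases isInt_iff.1 (hA j) with ⟨m, hm⟩
        simp [hm, Rout_int, toInt]
      rw [hRj, Function.update_eq_self]
  · have hjlive : (T j).isInt = false := by
      rcases exists_live hA with ⟨i, hi⟩
      by_cases hij : i = j
      · subst hij; exact hi
      · exact absurd (hdead i hij) (by rw [hi]; simp)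
    obtain ⟨L, R, hTj⟩ : ∃ L R, T j = node L R := by
      cases hTj2 : T j with
      | int m => rw [hTj2] at hjlive; simp [isInt] at hjlive
      | node L R => exact ⟨L, R, rfl⟩
    have hneL : L ≠ [] := by
      have := (wt_opts_ne_nil (hw j) hjlive).1
      rw [hTj] at this; simpa [lopts] using this
    have hneR : R ≠ [] := by
      have := (wt_opts_ne_nil (hw j) hjlive).2
      rw [hTj] at this; simpa [ropts] using this
    have hSL : (T j).Lout ∈ S j := (out_mem_S _ (hv j) (hw j)).1
    have hSR : (T j).Rout ∈ S j := (out_mem_S _ (hv j) (hw j)).2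
    have hvecS : ∀ (x : ℤ), x ∈ S j →
        ∀ i, Function.update (fun i => (T i).toInt) j x i ∈ S i :=
      fun x hx => update_vec_mem (fun i hij => hv i) hdead hx
    -- key : outs of one-step updates
    have key : ∀ g, (g ∈ (T j).lopts ∨ g ∈ (T j).ropts) →
        (fextn f (Function.update T j g)).Lout
          = f (Function.update (fun i => (T i).toInt) j g.Lout) ∧
        (fextn f (Function.update T j g)).Rout
          = f (Function.update (fun i => (T i).toInt) j g.Rout) := by
      intro g hg
      have hwg : Wt g := by
        rcases hg with hg | hg
        · exact wt_mem_lopts (hw j) hg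
        · exact wt_mem_ropts (hw j) hg
      have hvg : Valued (S j) g := by
        rcases hg with hg | hg
        · exact valued_mem_lopts (hv j) hg
        · exact valued_mem_ropts (hv j) hg
      have hsz : sizeOf (Function.update T j g j) < s := by
        rw [Function.update_self, ← hTs]
        rcases hg with hg | hg
        · exact sizeOf_lt_of_mem_lopts hg
        · exact sizeOf_lt_of_mem_ropts hg
      have hIH := ih _ hsz (Function.update T j g) j
        (fun i hij => by rw [Function.update_of_ne hij]; exact hdead i hij)
        (forall_update hw hwg) (forall_update hv hvg) rfl
      rw [Function.update_self] at hIH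
      have hvec : Function.update (fun i => ((Function.update T j g) i).toInt) j
          = Function.update (fun i => (T i).toInt) j := by
        funext x k
        by_cases hk : k = j
        · subst hk; simp
        · simp [Function.update_of_ne hk]
      rw [hvec] at hIH
      exact hIH
    constructor
    · -- Lout
      refine le_antisymm ?_ ?_
      · refine Lout_fextn_le hw hA fun i g hg => ?_
        have hij : i = j := by
          by_contra hij
          rcases isInt_iff.1 (hdead i hij) with ⟨m, hm⟩
          rw [hm] at hg; simp [lopts] at hg
        subst hij
        rw [(key g (Or.inl hg)).2]
        refine hf _ _ (hvecS _ (out_mem_S _ (valued_mem_lopts (hv i) hg)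
            (wt_mem_lopts (hw i) hg)).2) (hvecS _ hSL) fun k => ?_
        rw [Function.update_apply, Function.update_apply]
        split_ifs with hk
        · have : g.Rout ≤ (T i).Lout := by
            rw [hTj]
            exact le_Lout (by rw [hTj] at hg; simpa [lopts] using hg)
          exact this
        · exact le_refl _
      · rcases Lout_mem (L := L) (R := R) hneL with ⟨g, hg, hE⟩
        have hg' : g ∈ (T j).lopts := by rw [hTj]; simpa [lopts] using hg
        have := le_Lout_fextn (f := f) hA hg'
        rw [(key g (Or.inl hg')).2] at this
        rw [hTj, hE]
        exact this
    · -- Rout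
      refine le_antisymm ?_ ?_
      · rcases Rout_mem (L := L) (R := R) hneR with ⟨g, hg, hE⟩
        have hg' : g ∈ (T j).ropts := by rw [hTj]; simpa [ropts] using hg
        have := Rout_fextn_le (f := f) hA hg'
        rw [(key g (Or.inr hg')).1] at this
        rw [hTj, hE]
        exact this
      · refine le_Rout_fextn hw hA fun i g hg => ?_
        have hij : i = j := by
          by_contra hij
          rcases isInt_iff.1 (hdead i hij) with ⟨m, hm⟩
          rw [hm] at hg; simp [ropts] at hg
        subst hij
        rw [(key g (Or.inr hg)).1]
        refine hf _ _ (hvecS _ hSR) (hvecS _ (out_mem_S _ (valued_mem_ropts (hv i) hg)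
            (wt_mem_ropts (hw i) hg)).1) fun k => ?_
        rw [Function.update_apply, Function.update_apply]
        split_ifs with hk
        · have : (T i).Rout ≤ g.Lout := by
            rw [hTj]
            exact Rout_le (by rw [hTj] at hg; simpa [ropts] using hg)
          exact this
        · exact le_refl _

end WT
namespace WT

variable {n : ℕ}

theorem forall_update' {P : Fin n → WT → Prop} {T : Fin n → WT} {i : Fin n} {g : WT}
    (h : ∀ k, k ≠ i → P k (T k)) (hg : P i g) : ∀ k, P k (Function.update T i g k) := by
  intro k
  rw [Function.update_apply]
  split_ifs with hk
  · subst hk; exact hg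
  · exact h k hk

theorem others_update {P : Fin n → WT → Prop} {T : Fin n → WT} {i j : Fin n} {g : WT}
    (h : ∀ k, k ≠ j → P k (T k)) (hg : P i g) :
    ∀ k, k ≠ j → P k (Function.update T i g k) := by
  intro k hk
  rw [Function.update_apply]
  split_ifs with hki
  · subst hki; exact hg
  · exact h k hk

theorem live_of_esum_odd {T : Fin n → WT} {j : Fin n} (h : esum T j % 2 = 1) :
    ∃ i, i ≠ j ∧ (T i).isInt = false := by
  by_contra hc
  push_neg at hc
  have h0 : esum T j = 0 := by
    refine Finset.sum_eq_zero fun i hi => ?_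
    have hij := Finset.ne_of_mem_erase hi
    exact pn_isInt (by
      cases hB : (T i).isInt with
      | false => exact absurd hB (hc i hij)
      | true => rfl)
  rw [h0] at h
  simp at h

theorem allInt_update_of_dead {T : Fin n → WT} {j : Fin n} {m : ℤ}
    (hdead : ∀ i, i ≠ j → (T i).isInt = true) :
    allInt (Function.update T j (int m)) := by
  intro i
  rw [Function.update_apply]
  split_ifs with hij
  · rfl
  · exact hdead i hij

theorem notAllInt_update_node {T : Fin n → WT} {j : Fin n} {L R : List WT} :
    ¬ allInt (Function.update T j (node L R)) := by
  intro h
  have := h j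
  rw [Function.update_self] at this
  simp [isInt] at this

theorem esum_dead {T : Fin n → WT} {j : Fin n}
    (hdead : ∀ i, i ≠ j → (T i).isInt = true) : esum T j % 2 = 0 := by
  have h0 : esum T j = 0 :=
    Finset.sum_eq_zero fun i hi => pn_isInt (hdead i (Finset.ne_of_mem_erase hi))
  simp [h0]

section MasterDefs

variable (S : Fin n → Set ℤ) (f : (Fin n → ℤ) → ℤ)

/-- Hypothesis bundle for the simulation claims. -/
def HH (T : Fin n → WT) (j : Fin n) (c : ℤ) (X : WT) : Prop :=
  (∀ i, i ≠ j → Wt (T i)) ∧ (∀ i, i ≠ j → Invh (T i)) ∧ (∀ i, i ≠ j → Valued (S i) (T i)) ∧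
  Wt X ∧ Valued (S j) X ∧ c ∈ S j

def PC1 (N : ℕ) : Prop := ∀ (T : Fin n → WT) (j : Fin n) (c : ℤ) (Y : WT),
  3 * tupSize (Function.update T j Y) ≤ N → HH S T j c Y → SE Y c → esum T j % 2 = 0 →
  (fextn f (Function.update T j Y)).Rout ≤ (fextn f (Function.update T j (int c))).Rout

def PC1o (N : ℕ) : Prop := ∀ (T : Fin n → WT) (j : Fin n) (c : ℤ) (X : WT),
  3 * tupSize (Function.update T j X) ≤ N → HH S T j c X → SEo X c → esum T j % 2 = 1 →
  (fextn f (Function.update T j X)).Rout ≤ (fextn f (Function.update T j (int c))).Rout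

def PC2 (N : ℕ) : Prop := ∀ (T : Fin n → WT) (j : Fin n) (c : ℤ) (Y : WT),
  3 * tupSize (Function.update T j Y) ≤ N → HH S T j c Y → SE Y c → esum T j % 2 = 1 →
  (fextn f (Function.update T j Y)).Lout ≤ (fextn f (Function.update T j (int c))).Lout

def PC2o (N : ℕ) : Prop := ∀ (T : Fin n → WT) (j : Fin n) (c : ℤ) (X : WT),
  3 * tupSize (Function.update T j X) ≤ N → HH S T j c X → SEo X c → esum T j % 2 = 0 →
  (fextn f (Function.update T j X)).Lout ≤ (fextn f (Function.update T j (int c))).Lout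

def PC4 (N : ℕ) : Prop := ∀ (T : Fin n → WT) (j : Fin n) (c : ℤ) (W : WT),
  3 * tupSize (Function.update T j W) ≤ N → HH S T j c W → SO W c → esum T j % 2 = 1 →
  (fextn f (Function.update T j W)).Rout ≤ (fextn f (Function.update T j (int c))).Lout

def PC4o (N : ℕ) : Prop := ∀ (T : Fin n → WT) (j : Fin n) (c : ℤ) (V : WT),
  3 * tupSize (Function.update T j V) + 2 ≤ N → HH S T j c V → SOo V c → esum T j % 2 = 0 →
  (fextn f (Function.update T j V)).Rout ≤ (fextn f (Function.update T j (int c))).Lout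

def PA1 (N : ℕ) : Prop := ∀ (T : Fin n → WT) (j : Fin n) (c : ℤ) (C : WT),
  3 * tupSize (Function.update T j C) ≤ N → HH S T j c C → RV1 C c → esum T j % 2 = 0 →
  (fextn f (Function.update T j (int c))).Rout ≤ (fextn f (Function.update T j C)).Rout

def PA2 (N : ℕ) : Prop := ∀ (T : Fin n → WT) (j : Fin n) (c : ℤ) (C : WT),
  3 * tupSize (Function.update T j C) ≤ N → HH S T j c C → RV1 C c → esum T j % 2 = 1 →
  (fextn f (Function.update T j (int c))).Lout ≤ (fextn f (Function.update T j C)).Lout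

def PA3 (N : ℕ) : Prop := ∀ (T : Fin n → WT) (j : Fin n) (c : ℤ) (D : WT),
  3 * tupSize (Function.update T j D) + 2 ≤ N → HH S T j c D → RVE D c → esum T j % 2 = 0 →
  (fextn f (Function.update T j (int c))).Rout ≤ (fextn f (Function.update T j D)).Lout

def PB1 (N : ℕ) : Prop := ∀ (T : Fin n → WT) (j : Fin n) (c : ℤ) (D : WT),
  3 * tupSize (Function.update T j D) ≤ N → HH S T j c D → RVEp D c → esum T j % 2 = 1 →
  (fextn f (Function.update T j (int c))).Rout ≤ (fextn f (Function.update T j D)).Rout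

def PB2 (N : ℕ) : Prop := ∀ (T : Fin n → WT) (j : Fin n) (c : ℤ) (D : WT),
  3 * tupSize (Function.update T j D) ≤ N → HH S T j c D → RVEp D c → esum T j % 2 = 0 →
  (fextn f (Function.update T j (int c))).Lout ≤ (fextn f (Function.update T j D)).Lout

def PB3 (N : ℕ) : Prop := ∀ (T : Fin n → WT) (j : Fin n) (c : ℤ) (W : WT),
  3 * tupSize (Function.update T j W) ≤ N → HH S T j c W → RVO W c → esum T j % 2 = 1 →
  (fextn f (Function.update T j (int c))).Rout ≤ (fextn f (Function.update T j W)).Lout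

def PE (N : ℕ) : Prop := ∀ T : Fin n → WT,
  3 * tupSize T + 1 ≤ N →
  (∀ i, Wt (T i)) → (∀ i, Invh (T i)) → (∀ i, Valued (S i) (T i)) →
  tsum T % 2 = 0 → (fextn f T).Rout ≤ (fextn f T).Lout

def BigConj (N : ℕ) : Prop :=
  PC1 S f N ∧ PC1o S f N ∧ PC2 S f N ∧ PC2o S f N ∧ PC4 S f N ∧ PC4o S f N ∧
  PA1 S f N ∧ PA2 S f N ∧ PA3 S f N ∧ PB1 S f N ∧ PB2 S f N ∧ PB3 S f N ∧ PE S f N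

end MasterDefs

end WT
namespace WT

variable {n : ℕ} {S : Fin n → Set ℤ} {f : (Fin n → ℤ) → ℤ}

theorem isInt_false_of_mem_ropts {G g : WT} (hg : g ∈ G.ropts) : G.isInt = false := by
  cases G with
  | int m => simp [ropts] at hg
  | node L R => rfl

theorem isInt_false_of_mem_lopts {G g : WT} (hg : g ∈ G.lopts) : G.isInt = false := by
  cases G with
  | int m => simp [lopts] at hg
  | node L R => rfl

theorem ucomm {T : Fin n → WT} {i j : Fin n} (hij : i ≠ j) (X g : WT) :
    Function.update (Function.update T j X) i g = Function.update (Function.update T i g) j X :=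
  Function.update_comm (Ne.symm hij) X g T

theorem tup_lt_other {T : Fin n → WT} {j i : Fin n} (hij : i ≠ j) {g : WT} (X : WT)
    (hg : sizeOf g < sizeOf (T i)) :
    tupSize (Function.update (Function.update T i g) j X)
      < tupSize (Function.update T j X) := by
  rw [← ucomm hij X g]
  exact tupSize_update_lt _ i g (by rw [Function.update_of_ne hij]; exact hg)

theorem tup_lt_j {T : Fin n → WT} {j : Fin n} {X g : WT} (hg : sizeOf g < sizeOf X) :
    tupSize (Function.update T j g) < tupSize (Function.update T j X) := by
  unfold tupSize
  have h1 : ∀ s : Fin n → WT,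
      ∑ i, sizeOf (s i) = sizeOf (s j) + ∑ i ∈ Finset.univ.erase j, sizeOf (s i) :=
    fun s => (Finset.add_sum_erase _ _ (Finset.mem_univ j)).symm
  rw [h1, h1]
  have h2 : ∑ i ∈ Finset.univ.erase j, sizeOf (Function.update T j g i)
      = ∑ i ∈ Finset.univ.erase j, sizeOf (Function.update T j X i) :=
    Finset.sum_congr rfl fun i hi => by
      rw [Function.update_of_ne (Finset.ne_of_mem_erase hi),
        Function.update_of_ne (Finset.ne_of_mem_erase hi)]
  rw [h2, Function.update_self, Function.update_self]
  omega

theorem tup_eq_j (T : Fin n → WT) (j : Fin n) (X g : WT) (h : sizeOf g = sizeOf X) :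
    tupSize (Function.update T j g) = tupSize (Function.update T j X) := by
  unfold tupSize
  refine Finset.sum_congr rfl fun i _ => ?_
  rw [Function.update_apply, Function.update_apply]
  split_ifs with hij
  · exact h
  · rfl

theorem HH_mirror {T : Fin n → WT} {j i : Fin n} {c : ℤ} {X g : WT}
    (hH : HH S T j c X) (hij : i ≠ j) (hg : g ∈ (T i).lopts ∨ g ∈ (T i).ropts) :
    HH S (Function.update T i g) j c X := by
  obtain ⟨hWo, hIo, hVo, hXw, hXv, hcS⟩ := hH
  have hwg : Wt g := by
    rcases hg with hg | hg
    · exact wt_mem_lopts (hWo i hij) hg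
    · exact wt_mem_ropts (hWo i hij) hg
  have hig : Invh g := by
    rcases hg with hg | hg
    · exact invh_mem_lopts (hIo i hij) hg
    · exact invh_mem_ropts (hIo i hij) hg
  have hvg : Valued (S i) g := by
    rcases hg with hg | hg
    · exact valued_mem_lopts (hVo i hij) hg
    · exact valued_mem_ropts (hVo i hij) hg
  exact ⟨others_update hWo hwg, others_update hIo hig, others_update hVo hvg, hXw, hXv, hcS⟩

theorem HH_jmove {T : Fin n → WT} {j : Fin n} {c : ℤ} {X g : WT}
    (hH : HH S T j c X) (hwg : Wt g) (hvg : Valued (S j) g) :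
    HH S T j c g := by
  obtain ⟨hWo, hIo, hVo, _, _, hcS⟩ := hH
  exact ⟨hWo, hIo, hVo, hwg, hvg, hcS⟩

theorem esum_flip {T : Fin n → WT} {i j : Fin n} (hij : i ≠ j) (hw : Wt (T i)) {g : WT}
    (hg : g ∈ (T i).lopts ∨ g ∈ (T i).ropts) :
    esum (Function.update T i g) j % 2 = (esum T j + 1) % 2 := by
  refine esum_update_flip hij ?_
  rcases hg with hg | hg
  · exact par_mem_lopts hw hg
  · exact par_mem_ropts hw hg

theorem dead_eval {T : Fin n → WT} {j : Fin n} {c : ℤ}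
    (hdead : ∀ i, i ≠ j → (T i).isInt = true) :
    fextn f (Function.update T j (int c))
      = int (f (Function.update (fun i => (T i).toInt) j c)) := by
  rw [fextn_int (allInt_update_of_dead hdead)]
  have hvec : (fun i => (Function.update T j (int c) i).toInt)
      = Function.update (fun i => (T i).toInt) j c := by
    funext i
    by_cases hij : i = j
    · subst hij; simp [toInt]
    · simp [Function.update_of_ne hij]
  rw [hvec]

theorem eg_update
    (hf : ∀ x y : Fin n → ℤ, (∀ i, x i ∈ S i) → (∀ i, y i ∈ S i) →
      (∀ i, x i ≤ y i) → f x ≤ f y)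
    {T : Fin n → WT} {j : Fin n} {X : WT}
    (hdead : ∀ i, i ≠ j → (T i).isInt = true)
    (hWo : ∀ i, i ≠ j → Wt (T i)) (hVo : ∀ i, i ≠ j → Valued (S i) (T i))
    (hXw : Wt X) (hXv : Valued (S j) X) :
    (fextn f (Function.update T j X)).Lout
        = f (Function.update (fun i => (T i).toInt) j X.Lout) ∧
    (fextn f (Function.update T j X)).Rout
        = f (Function.update (fun i => (T i).toInt) j X.Rout) := by
  have h := eg hf (Function.update T j X) j
    (fun i hij => by rw [Function.update_of_ne hij]; exact hdead i hij)
    (forall_update' hWo hXw) (forall_update' hVo hXv)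
  have hvec : Function.update (fun i => ((Function.update T j X) i).toInt) j
      = Function.update (fun i => (T i).toInt) j := by
    funext x k
    by_cases hk : k = j
    · subst hk; simp
    · simp [Function.update_of_ne hk]
  rw [hvec, Function.update_self] at h
  exact h

theorem f_mono_at_j
    (hf : ∀ x y : Fin n → ℤ, (∀ i, x i ∈ S i) → (∀ i, y i ∈ S i) →
      (∀ i, x i ≤ y i) → f x ≤ f y)
    {T : Fin n → WT} {j : Fin n} {a b : ℤ}
    (hdead : ∀ i, i ≠ j → (T i).isInt = true) (hVo : ∀ i, i ≠ j → Valued (S i) (T i))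
    (ha : a ∈ S j) (hb : b ∈ S j) (hab : a ≤ b) :
    f (Function.update (fun i => (T i).toInt) j a)
      ≤ f (Function.update (fun i => (T i).toInt) j b) := by
  refine hf _ _ (update_vec_mem hVo hdead ha) (update_vec_mem hVo hdead hb) fun k => ?_
  rw [Function.update_apply, Function.update_apply]
  split_ifs with hk
  · exact hab
  · exact le_refl _

end WT
namespace WT

variable {n : ℕ} {S : Fin n → Set ℤ} {f : (Fin n → ℤ) → ℤ}

section Steps

variable (hf : ∀ x y : Fin n → ℤ, (∀ i, x i ∈ S i) → (∀ i, y i ∈ S i) →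
      (∀ i, x i ≤ y i) → f x ≤ f y)

include hf

theorem stepC1 (N : ℕ) (ih : ∀ M, M < N → BigConj S f M) : PC1 S f N := by
  intro T j c Y hN hH hSE hpar
  obtain ⟨hWo, hIo, hVo, hXw, hXv, hcS⟩ := hH
  cases hSE with
  | @int d c hdc =>
    have h := mi hf (Function.update T j (int c)) j c d (Function.update_self _ _ _)
      (forall_update' hWo (isWT_int' c)) (forall_update' hVo (Valued.int hcS))
      (valued_int_mem hXv) hdc
    rw [Function.update_idem] at h
    exact h.2
  | @node L R c h1 r hr h2 =>
    by_cases hdead : ∀ i, i ≠ j → (T i).isInt = true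
    · have hegY := eg_update hf hdead hWo hVo hXw hXv
      rw [hegY.2, dead_eval hdead, Rout_int]
      exact f_mono_at_j hf hdead hVo (out_mem_S _ hXv hXw).2 hcS
        (se_valR (SE.node h1 hr h2) hXw)
    · push_neg at hdead
      obtain ⟨i0, hi0j, hi0⟩ := hdead
      have hlive : (T i0).isInt = false := by
        cases hB : (T i0).isInt with
        | false => rfl
        | true => exact absurd hB hi0
      have hncUc : ¬ allInt (Function.update T j (int c)) := by
        intro hAll
        have := hAll i0
        rw [Function.update_of_ne hi0j, hlive] at this
        simp at this
      have hwUc : ∀ i, Wt (Function.update T j (int c) i) :=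
        forall_update' hWo (isWT_int' c)
      obtain ⟨i, g, hg, hE⟩ := Rout_fextn_mem hwUc hncUc
      have hij : i ≠ j := by
        intro h; subst h; rw [Function.update_self] at hg; simp [ropts] at hg
      rw [Function.update_of_ne hij] at hg
      rw [hE, ucomm hij (int c) g]
      have hnU : ¬ allInt (Function.update T j (node L R)) := notAllInt_update_node
      have hgU : g ∈ ((Function.update T j (node L R)) i).ropts := by
        rw [Function.update_of_ne hij]; exact hg
      refine le_trans (Rout_fextn_le hnU hgU) ?_
      rw [ucomm hij (node L R) g]
      have hlt : tupSize (Function.update (Function.update T i g) j (node L R))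
          < tupSize (Function.update T j (node L R)) :=
        tup_lt_other hij _ (sizeOf_lt_of_mem_ropts hg)
      obtain ⟨_, _, hC2, _, _, _, _, _, _, _, _, _, _⟩ :=
        ih (3 * tupSize (Function.update (Function.update T i g) j (node L R))) (by omega)
      exact hC2 (Function.update T i g) j c (node L R) (le_refl _)
        (HH_mirror ⟨hWo, hIo, hVo, hXw, hXv, hcS⟩ hij (Or.inr hg)) (SE.node h1 hr h2)
        (by rw [esum_flip hij (hWo i hij) (Or.inr hg)]; omega)

theorem stepC1o (N : ℕ) (ih : ∀ M, M < N → BigConj S f M) : PC1o S f N := by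
  intro T j c X hN hH hSEo hpar
  obtain ⟨hWo, hIo, hVo, hXw, hXv, hcS⟩ := hH
  cases hSEo with
  | @mk L R c h =>
    obtain ⟨i0, hi0j, hlive⟩ := live_of_esum_odd hpar
    have hncUc : ¬ allInt (Function.update T j (int c)) := by
      intro hAll
      have := hAll i0
      rw [Function.update_of_ne hi0j, hlive] at this
      simp at this
    have hwUc : ∀ i, Wt (Function.update T j (int c) i) :=
      forall_update' hWo (isWT_int' c)
    obtain ⟨i, g, hg, hE⟩ := Rout_fextn_mem hwUc hncUc
    have hij : i ≠ j := by
      intro h; subst h; rw [Function.update_self] at hg; simp [ropts] at hg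
    rw [Function.update_of_ne hij] at hg
    rw [hE, ucomm hij (int c) g]
    have hnU : ¬ allInt (Function.update T j (node L R)) := notAllInt_update_node
    have hgU : g ∈ ((Function.update T j (node L R)) i).ropts := by
      rw [Function.update_of_ne hij]; exact hg
    refine le_trans (Rout_fextn_le hnU hgU) ?_
    rw [ucomm hij (node L R) g]
    have hlt : tupSize (Function.update (Function.update T i g) j (node L R))
        < tupSize (Function.update T j (node L R)) :=
      tup_lt_other hij _ (sizeOf_lt_of_mem_ropts hg)
    obtain ⟨_, _, _, hC2o, _, _, _, _, _, _, _, _, _⟩ :=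
      ih (3 * tupSize (Function.update (Function.update T i g) j (node L R))) (by omega)
    exact hC2o (Function.update T i g) j c (node L R) (le_refl _)
      (HH_mirror ⟨hWo, hIo, hVo, hXw, hXv, hcS⟩ hij (Or.inr hg)) (SEo.mk h)
      (by rw [esum_flip hij (hWo i hij) (Or.inr hg)]; omega)

theorem stepC2 (N : ℕ) (ih : ∀ M, M < N → BigConj S f M) : PC2 S f N := by
  intro T j c Y hN hH hSE hpar
  obtain ⟨hWo, hIo, hVo, hXw, hXv, hcS⟩ := hH
  cases hSE with
  | @int d c hdc =>
    have h := mi hf (Function.update T j (int c)) j c d (Function.update_self _ _ _)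
      (forall_update' hWo (isWT_int' c)) (forall_update' hVo (Valued.int hcS))
      (valued_int_mem hXv) hdc
    rw [Function.update_idem] at h
    exact h.1
  | @node L R c h1 r hr h2 =>
    obtain ⟨i0, hi0j, hlive⟩ := live_of_esum_odd hpar
    have hncUc : ¬ allInt (Function.update T j (int c)) := by
      intro hAll
      have := hAll i0
      rw [Function.update_of_ne hi0j, hlive] at this
      simp at this
    have hnU : ¬ allInt (Function.update T j (node L R)) := notAllInt_update_node
    have hwU : ∀ i, Wt (Function.update T j (node L R) i) := forall_update' hWo hXw
    refine Lout_fextn_le hwU hnU fun i g hg => ?_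
    by_cases hij : i = j
    · subst hij
      rw [Function.update_self] at hg
      rw [Function.update_idem]
      have hg' : g ∈ L := by simpa [lopts] using hg
      have hlt : tupSize (Function.update T i g)
          < tupSize (Function.update T i (node L R)) :=
        tup_lt_j (sizeOf_lt_of_mem_lopts hg)
      obtain ⟨_, _, _, _, hC4, _, _, _, _, _, _, _, _⟩ :=
        ih (3 * tupSize (Function.update T i g)) (by omega)
      exact hC4 T i c g (le_refl _)
        (HH_jmove ⟨hWo, hIo, hVo, hXw, hXv, hcS⟩ (wt_mem_lopts hXw hg)
          (valued_mem_lopts hXv hg))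
        (h1 g hg') hpar
    · rw [Function.update_of_ne hij] at hg
      rw [ucomm hij (node L R) g]
      have hlt : tupSize (Function.update (Function.update T i g) j (node L R))
          < tupSize (Function.update T j (node L R)) :=
        tup_lt_other hij _ (sizeOf_lt_of_mem_lopts hg)
      obtain ⟨hC1, _, _, _, _, _, _, _, _, _, _, _, _⟩ :=
        ih (3 * tupSize (Function.update (Function.update T i g) j (node L R))) (by omega)
      refine le_trans (hC1 (Function.update T i g) j c (node L R) (le_refl _)
        (HH_mirror ⟨hWo, hIo, hVo, hXw, hXv, hcS⟩ hij (Or.inl hg)) (SE.node h1 hr h2)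
        (by rw [esum_flip hij (hWo i hij) (Or.inl hg)]; omega)) ?_
      rw [← ucomm hij (int c) g]
      exact le_Lout_fextn hncUc (by rw [Function.update_of_ne hij]; exact hg)

theorem stepC2o (N : ℕ) (ih : ∀ M, M < N → BigConj S f M) : PC2o S f N := by
  intro T j c X hN hH hSEo hpar
  obtain ⟨hWo, hIo, hVo, hXw, hXv, hcS⟩ := hH
  cases hSEo with
  | @mk L R c h =>
    by_cases hdead : ∀ i, i ≠ j → (T i).isInt = true
    · have hegY := eg_update hf hdead hWo hVo hXw hXv
      rw [hegY.1, dead_eval hdead, Lout_int]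
      exact f_mono_at_j hf hdead hVo (out_mem_S _ hXv hXw).1 hcS
        (seo_valL (SEo.mk h) hXw)
    · push_neg at hdead
      obtain ⟨i0, hi0j, hi0⟩ := hdead
      have hlive : (T i0).isInt = false := by
        cases hB : (T i0).isInt with
        | false => rfl
        | true => exact absurd hB hi0
      have hncUc : ¬ allInt (Function.update T j (int c)) := by
        intro hAll
        have := hAll i0
        rw [Function.update_of_ne hi0j, hlive] at this
        simp at this
      have hnU : ¬ allInt (Function.update T j (node L R)) := notAllInt_update_node
      have hwU : ∀ i, Wt (Function.update T j (node L R) i) := forall_update' hWo hXw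
      refine Lout_fextn_le hwU hnU fun i g hg => ?_
      by_cases hij : i = j
      · subst hij
        rw [Function.update_self] at hg
        rw [Function.update_idem]
        have hg' : g ∈ L := by simpa [lopts] using hg
        have hlt : tupSize (Function.update T i g)
            < tupSize (Function.update T i (node L R)) :=
          tup_lt_j (sizeOf_lt_of_mem_lopts hg)
        obtain ⟨_, _, _, _, _, hC4o, _, _, _, _, _, _, _⟩ :=
          ih (3 * tupSize (Function.update T i g) + 2) (by omega)
        exact hC4o T i c g (le_refl _)
          (HH_jmove ⟨hWo, hIo, hVo, hXw, hXv, hcS⟩ (wt_mem_lopts hXw hg)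
            (valued_mem_lopts hXv hg))
          (h g hg') hpar
      · rw [Function.update_of_ne hij] at hg
        rw [ucomm hij (node L R) g]
        have hlt : tupSize (Function.update (Function.update T i g) j (node L R))
            < tupSize (Function.update T j (node L R)) :=
          tup_lt_other hij _ (sizeOf_lt_of_mem_lopts hg)
        obtain ⟨_, hC1o, _, _, _, _, _, _, _, _, _, _, _⟩ :=
          ih (3 * tupSize (Function.update (Function.update T i g) j (node L R))) (by omega)
        refine le_trans (hC1o (Function.update T i g) j c (node L R) (le_refl _)
          (HH_mirror ⟨hWo, hIo, hVo, hXw, hXv, hcS⟩ hij (Or.inl hg)) (SEo.mk h)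
          (by rw [esum_flip hij (hWo i hij) (Or.inl hg)]; omega)) ?_
        rw [← ucomm hij (int c) g]
        exact le_Lout_fextn hncUc (by rw [Function.update_of_ne hij]; exact hg)

theorem stepC4 (N : ℕ) (ih : ∀ M, M < N → BigConj S f M) : PC4 S f N := by
  intro T j c W hN hH hSO hpar
  obtain ⟨hWo, hIo, hVo, hXw, hXv, hcS⟩ := hH
  cases hSO with
  | @mk L R c r hr h =>
    have hnU : ¬ allInt (Function.update T j (node L R)) := notAllInt_update_node
    have hr' : r ∈ ((Function.update T j (node L R)) j).ropts := by
      rw [Function.update_self]; simpa [ropts] using hr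
    refine le_trans (Rout_fextn_le hnU hr') ?_
    rw [Function.update_idem]
    have hlt : tupSize (Function.update T j r)
        < tupSize (Function.update T j (node L R)) :=
      tup_lt_j (sizeOf_lt_of_mem_ropts (by simpa [ropts] using hr))
    obtain ⟨_, _, hC2, _, _, _, _, _, _, _, _, _, _⟩ :=
      ih (3 * tupSize (Function.update T j r)) (by omega)
    exact hC2 T j c r (le_refl _)
      (HH_jmove ⟨hWo, hIo, hVo, hXw, hXv, hcS⟩
        (wt_mem_ropts hXw (by simpa [ropts] using hr))
        (valued_mem_ropts hXv (by simpa [ropts] using hr)))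
      h hpar

theorem stepC4o (N : ℕ) (ih : ∀ M, M < N → BigConj S f M) : PC4o S f N := by
  intro T j c V hN hH hSOo hpar
  obtain ⟨hWo, hIo, hVo, hXw, hXv, hcS⟩ := hH
  cases hSOo with
  | @int d c hdc =>
    obtain ⟨_, _, _, _, _, _, _, _, _, _, _, _, hE⟩ :=
      ih (3 * tupSize (Function.update T j (int d)) + 1) (by omega)
    refine le_trans (hE (Function.update T j (int d)) (le_refl _)
      (forall_update' hWo (isWT_int' d)) (forall_update' hIo (invh_int d))
      (forall_update' hVo hXv) ?_) ?_
    · rw [tsum_update, pn_int]; omega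
    · have h := mi hf (Function.update T j (int c)) j c d (Function.update_self _ _ _)
        (forall_update' hWo (isWT_int' c)) (forall_update' hVo (Valued.int hcS))
        (valued_int_mem hXv) hdc
      rw [Function.update_idem] at h
      exact h.1
  | @node L R c r hr h =>
    have hnU : ¬ allInt (Function.update T j (node L R)) := notAllInt_update_node
    have hr' : r ∈ ((Function.update T j (node L R)) j).ropts := by
      rw [Function.update_self]; simpa [ropts] using hr
    refine le_trans (Rout_fextn_le hnU hr') ?_
    rw [Function.update_idem]
    have hlt : tupSize (Function.update T j r)
        < tupSize (Function.update T j (node L R)) :=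
      tup_lt_j (sizeOf_lt_of_mem_ropts (by simpa [ropts] using hr))
    obtain ⟨_, _, _, hC2o, _, _, _, _, _, _, _, _, _⟩ :=
      ih (3 * tupSize (Function.update T j r)) (by omega)
    exact hC2o T j c r (le_refl _)
      (HH_jmove ⟨hWo, hIo, hVo, hXw, hXv, hcS⟩
        (wt_mem_ropts hXw (by simpa [ropts] using hr))
        (valued_mem_ropts hXv (by simpa [ropts] using hr)))
      h hpar

end Steps

end WT
namespace WT

variable {n : ℕ} {S : Fin n → Set ℤ} {f : (Fin n → ℤ) → ℤ}

section Steps2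

variable (hf : ∀ x y : Fin n → ℤ, (∀ i, x i ∈ S i) → (∀ i, y i ∈ S i) →
      (∀ i, x i ≤ y i) → f x ≤ f y)

include hf

theorem stepA1 (N : ℕ) (ih : ∀ M, M < N → BigConj S f M) : PA1 S f N := by
  intro T j c C hN hH hRV hpar
  obtain ⟨hWo, hIo, hVo, hXw, hXv, hcS⟩ := hH
  cases hRV with
  | @mk L R c h =>
    have hnU : ¬ allInt (Function.update T j (node L R)) := notAllInt_update_node
    have hwU : ∀ i, Wt (Function.update T j (node L R) i) := forall_update' hWo hXw
    refine le_Rout_fextn hwU hnU fun i g hg => ?_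
    by_cases hij : i = j
    · subst hij
      rw [Function.update_self] at hg
      rw [Function.update_idem]
      have hg' : g ∈ R := by simpa [ropts] using hg
      have hlt : tupSize (Function.update T i g)
          < tupSize (Function.update T i (node L R)) :=
        tup_lt_j (sizeOf_lt_of_mem_ropts hg)
      obtain ⟨_, _, _, _, _, _, _, _, hA3, _, _, _, _⟩ :=
        ih (3 * tupSize (Function.update T i g) + 2) (by omega)
      exact hA3 T i c g (le_refl _)
        (HH_jmove ⟨hWo, hIo, hVo, hXw, hXv, hcS⟩ (wt_mem_ropts hXw hg)
          (valued_mem_ropts hXv hg))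
        (h g hg') hpar
    · rw [Function.update_of_ne hij] at hg
      rw [ucomm hij (node L R) g]
      have hncUc : ¬ allInt (Function.update T j (int c)) := by
        intro hAll
        have := hAll i
        rw [Function.update_of_ne hij, isInt_false_of_mem_ropts hg] at this
        simp at this
      refine le_trans (Rout_fextn_le hncUc
        (by rw [Function.update_of_ne hij]; exact hg : g ∈ ((Function.update T j (int c)) i).ropts)) ?_
      rw [ucomm hij (int c) g]
      have hlt : tupSize (Function.update (Function.update T i g) j (node L R))
          < tupSize (Function.update T j (node L R)) :=
        tup_lt_other hij _ (sizeOf_lt_of_mem_ropts hg)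
      obtain ⟨_, _, _, _, _, _, _, hA2, _, _, _, _, _⟩ :=
        ih (3 * tupSize (Function.update (Function.update T i g) j (node L R))) (by omega)
      exact hA2 (Function.update T i g) j c (node L R) (le_refl _)
        (HH_mirror ⟨hWo, hIo, hVo, hXw, hXv, hcS⟩ hij (Or.inr hg)) (RV1.mk h)
        (by rw [esum_flip hij (hWo i hij) (Or.inr hg)]; omega)

theorem stepA2 (N : ℕ) (ih : ∀ M, M < N → BigConj S f M) : PA2 S f N := by
  intro T j c C hN hH hRV hpar
  obtain ⟨hWo, hIo, hVo, hXw, hXv, hcS⟩ := hH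
  cases hRV with
  | @mk L R c h =>
    obtain ⟨i0, hi0j, hlive⟩ := live_of_esum_odd hpar
    have hncUc : ¬ allInt (Function.update T j (int c)) := by
      intro hAll
      have := hAll i0
      rw [Function.update_of_ne hi0j, hlive] at this
      simp at this
    have hnU : ¬ allInt (Function.update T j (node L R)) := notAllInt_update_node
    have hwUc : ∀ i, Wt (Function.update T j (int c) i) :=
      forall_update' hWo (isWT_int' c)
    refine Lout_fextn_le hwUc hncUc fun i g hg => ?_
    have hij : i ≠ j := by
      intro h'; subst h'; rw [Function.update_self] at hg; simp [lopts] at hg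
    rw [Function.update_of_ne hij] at hg
    rw [ucomm hij (int c) g]
    have hlt : tupSize (Function.update (Function.update T i g) j (node L R))
        < tupSize (Function.update T j (node L R)) :=
      tup_lt_other hij _ (sizeOf_lt_of_mem_lopts hg)
    obtain ⟨_, _, _, _, _, _, hA1, _, _, _, _, _, _⟩ :=
      ih (3 * tupSize (Function.update (Function.update T i g) j (node L R))) (by omega)
    refine le_trans (hA1 (Function.update T i g) j c (node L R) (le_refl _)
      (HH_mirror ⟨hWo, hIo, hVo, hXw, hXv, hcS⟩ hij (Or.inl hg)) (RV1.mk h)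
      (by rw [esum_flip hij (hWo i hij) (Or.inl hg)]; omega)) ?_
    rw [← ucomm hij (node L R) g]
    exact le_Lout_fextn hnU (by rw [Function.update_of_ne hij]; exact hg)

theorem stepA3 (N : ℕ) (ih : ∀ M, M < N → BigConj S f M) : PA3 S f N := by
  intro T j c D hN hH hRVE hpar
  obtain ⟨hWo, hIo, hVo, hXw, hXv, hcS⟩ := hH
  cases hRVE with
  | @int d c hdc =>
    have h := mi hf (Function.update T j (int d)) j d c (Function.update_self _ _ _)
      (forall_update' hWo (isWT_int' d)) (forall_update' hVo hXv) hcS hdc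
    rw [Function.update_idem] at h
    obtain ⟨_, _, _, _, _, _, _, _, _, _, _, _, hE⟩ :=
      ih (3 * tupSize (Function.update T j (int d)) + 1) (by omega)
    refine le_trans h.2 (hE (Function.update T j (int d)) (le_refl _)
      (forall_update' hWo (isWT_int' d)) (forall_update' hIo (invh_int d))
      (forall_update' hVo hXv) ?_)
    rw [tsum_update, pn_int]; omega
  | @node L R c l hl h2 =>
    have hl' : l ∈ (node L R).lopts := by simpa [lopts] using hl
    have hlt : tupSize (Function.update T j l)
        < tupSize (Function.update T j (node L R)) :=
      tup_lt_j (sizeOf_lt_of_mem_lopts hl')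
    obtain ⟨_, _, _, _, _, _, hA1, _, _, _, _, _, _⟩ :=
      ih (3 * tupSize (Function.update T j l)) (by omega)
    refine le_trans (hA1 T j c l (le_refl _)
      (HH_jmove ⟨hWo, hIo, hVo, hXw, hXv, hcS⟩ (wt_mem_lopts hXw hl')
        (valued_mem_lopts hXv hl')) h2 hpar) ?_
    have hnU : ¬ allInt (Function.update T j (node L R)) := notAllInt_update_node
    have hmem : l ∈ ((Function.update T j (node L R)) j).lopts := by
      rw [Function.update_self]; exact hl'
    have := le_Lout_fextn (f := f) hnU hmem
    rwa [Function.update_idem] at this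

theorem stepB1 (N : ℕ) (ih : ∀ M, M < N → BigConj S f M) : PB1 S f N := by
  intro T j c D hN hH hRVEp hpar
  obtain ⟨hWo, hIo, hVo, hXw, hXv, hcS⟩ := hH
  cases hRVEp with
  | @int d c hdc =>
    have h := mi hf (Function.update T j (int d)) j d c (Function.update_self _ _ _)
      (forall_update' hWo (isWT_int' d)) (forall_update' hVo hXv) hcS hdc
    rw [Function.update_idem] at h
    exact h.2
  | @node L R c h1 l hl h2 =>
    have hnU : ¬ allInt (Function.update T j (node L R)) := notAllInt_update_node
    have hwU : ∀ i, Wt (Function.update T j (node L R) i) := forall_update' hWo hXw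
    refine le_Rout_fextn hwU hnU fun i g hg => ?_
    by_cases hij : i = j
    · subst hij
      rw [Function.update_self] at hg
      rw [Function.update_idem]
      have hg' : g ∈ R := by simpa [ropts] using hg
      have hlt : tupSize (Function.update T i g)
          < tupSize (Function.update T i (node L R)) :=
        tup_lt_j (sizeOf_lt_of_mem_ropts hg)
      obtain ⟨_, _, _, _, _, _, _, _, _, _, _, hB3, _⟩ :=
        ih (3 * tupSize (Function.update T i g)) (by omega)
      exact hB3 T i c g (le_refl _)
        (HH_jmove ⟨hWo, hIo, hVo, hXw, hXv, hcS⟩ (wt_mem_ropts hXw hg)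
          (valued_mem_ropts hXv hg))
        (h1 g hg') hpar
    · rw [Function.update_of_ne hij] at hg
      rw [ucomm hij (node L R) g]
      have hncUc : ¬ allInt (Function.update T j (int c)) := by
        intro hAll
        have := hAll i
        rw [Function.update_of_ne hij, isInt_false_of_mem_ropts hg] at this
        simp at this
      refine le_trans (Rout_fextn_le hncUc
        (by rw [Function.update_of_ne hij]; exact hg : g ∈ ((Function.update T j (int c)) i).ropts)) ?_
      rw [ucomm hij (int c) g]
      have hlt : tupSize (Function.update (Function.update T i g) j (node L R))
          < tupSize (Function.update T j (node L R)) :=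
        tup_lt_other hij _ (sizeOf_lt_of_mem_ropts hg)
      obtain ⟨_, _, _, _, _, _, _, _, _, _, hB2, _, _⟩ :=
        ih (3 * tupSize (Function.update (Function.update T i g) j (node L R))) (by omega)
      exact hB2 (Function.update T i g) j c (node L R) (le_refl _)
        (HH_mirror ⟨hWo, hIo, hVo, hXw, hXv, hcS⟩ hij (Or.inr hg)) (RVEp.node h1 hl h2)
        (by rw [esum_flip hij (hWo i hij) (Or.inr hg)]; omega)

theorem stepB2 (N : ℕ) (ih : ∀ M, M < N → BigConj S f M) : PB2 S f N := by
  intro T j c D hN hH hRVEp hpar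
  obtain ⟨hWo, hIo, hVo, hXw, hXv, hcS⟩ := hH
  cases hRVEp with
  | @int d c hdc =>
    have h := mi hf (Function.update T j (int d)) j d c (Function.update_self _ _ _)
      (forall_update' hWo (isWT_int' d)) (forall_update' hVo hXv) hcS hdc
    rw [Function.update_idem] at h
    exact h.1
  | @node L R c h1 l hl h2 =>
    by_cases hdead : ∀ i, i ≠ j → (T i).isInt = true
    · have hegY := eg_update hf hdead hWo hVo hXw hXv
      rw [hegY.1, dead_eval hdead, Lout_int]
      exact f_mono_at_j hf hdead hVo hcS (out_mem_S _ hXv hXw).1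
        (rvep_valL (RVEp.node h1 hl h2) hXw)
    · push_neg at hdead
      obtain ⟨i0, hi0j, hi0⟩ := hdead
      have hlive : (T i0).isInt = false := by
        cases hB : (T i0).isInt with
        | false => rfl
        | true => exact absurd hB hi0
      have hncUc : ¬ allInt (Function.update T j (int c)) := by
        intro hAll
        have := hAll i0
        rw [Function.update_of_ne hi0j, hlive] at this
        simp at this
      have hnU : ¬ allInt (Function.update T j (node L R)) := notAllInt_update_node
      have hwUc : ∀ i, Wt (Function.update T j (int c) i) :=
        forall_update' hWo (isWT_int' c)
      refine Lout_fextn_le hwUc hncUc fun i g hg => ?_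
      have hij : i ≠ j := by
        intro h'; subst h'; rw [Function.update_self] at hg; simp [lopts] at hg
      rw [Function.update_of_ne hij] at hg
      rw [ucomm hij (int c) g]
      have hlt : tupSize (Function.update (Function.update T i g) j (node L R))
          < tupSize (Function.update T j (node L R)) :=
        tup_lt_other hij _ (sizeOf_lt_of_mem_lopts hg)
      obtain ⟨_, _, _, _, _, _, _, _, _, hB1, _, _, _⟩ :=
        ih (3 * tupSize (Function.update (Function.update T i g) j (node L R))) (by omega)
      refine le_trans (hB1 (Function.update T i g) j c (node L R) (le_refl _)
        (HH_mirror ⟨hWo, hIo, hVo, hXw, hXv, hcS⟩ hij (Or.inl hg)) (RVEp.node h1 hl h2)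
        (by rw [esum_flip hij (hWo i hij) (Or.inl hg)]; omega)) ?_
      rw [← ucomm hij (node L R) g]
      exact le_Lout_fextn hnU (by rw [Function.update_of_ne hij]; exact hg)

theorem stepB3 (N : ℕ) (ih : ∀ M, M < N → BigConj S f M) : PB3 S f N := by
  intro T j c W hN hH hRVO hpar
  obtain ⟨hWo, hIo, hVo, hXw, hXv, hcS⟩ := hH
  cases hRVO with
  | @mk L R c l hl h =>
    have hl' : l ∈ (node L R).lopts := by simpa [lopts] using hl
    have hlt : tupSize (Function.update T j l)
        < tupSize (Function.update T j (node L R)) :=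
      tup_lt_j (sizeOf_lt_of_mem_lopts hl')
    obtain ⟨_, _, _, _, _, _, _, _, _, hB1, _, _, _⟩ :=
      ih (3 * tupSize (Function.update T j l)) (by omega)
    refine le_trans (hB1 T j c l (le_refl _)
      (HH_jmove ⟨hWo, hIo, hVo, hXw, hXv, hcS⟩ (wt_mem_lopts hXw hl')
        (valued_mem_lopts hXv hl')) h hpar) ?_
    have hnU : ¬ allInt (Function.update T j (node L R)) := notAllInt_update_node
    have hmem : l ∈ ((Function.update T j (node L R)) j).lopts := by
      rw [Function.update_self]; exact hl'
    have := le_Lout_fextn (f := f) hnU hmem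
    rwa [Function.update_idem] at this

theorem stepE (N : ℕ) (ih : ∀ M, M < N → BigConj S f M) : PE S f N := by
  intro T hN hW hI hV hpar
  by_cases hA : allInt T
  · rw [fextn_int hA, Lout_int, Rout_int]
  · obtain ⟨j, hjlive⟩ := exists_live hA
    set c := (T j).Lout with hc
    have hcS : c ∈ S j := (out_mem_S _ (hV j) (hW j)).1
    obtain ⟨L, R, hTj⟩ : ∃ L R, T j = node L R := by
      cases hTj2 : T j with
      | int m => rw [hTj2] at hjlive; simp [isInt] at hTj2 hjlive
      | node L R => exact ⟨L, R, rfl⟩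
    have hUT : Function.update T j (T j) = T := Function.update_eq_self j T
    have hneL : L ≠ [] := by
      have := (wt_opts_ne_nil (hW j) hjlive).1
      rw [hTj] at this; simpa [lopts] using this
    obtain ⟨Zl, hZl, hE⟩ := Lout_mem (R := R) hneL
    have hZl' : Zl ∈ (T j).lopts := by rw [hTj]; simpa [lopts] using hZl
    have hcZ : c ≤ Zl.Rout := by rw [hc, hTj, hE]
    have hRoutZ : (fextn f (Function.update T j Zl)).Rout ≤ (fextn f T).Lout :=
      le_Lout_fextn hA hZl'
    have hHH : HH S T j c (T j) :=
      ⟨fun i _ => hW i, fun i _ => hI i, fun i _ => hV i, hW j, hV j, hcS⟩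
    have hHHZ : HH S T j c Zl :=
      ⟨fun i _ => hW i, fun i _ => hI i, fun i _ => hV i,
        wt_mem_lopts (hW j) hZl', valued_mem_lopts (hV j) hZl', hcS⟩
    have htsum := tsum_eq T j
    cases hp : (T j).par with
    | false =>
      have hisWTj : IsWT (T j) false := by
        have := wt_par (hW j); rwa [hp] at this
      have hparO : esum T j % 2 = 0 := by
        have hpn : pn (T j) = 0 := by rw [pn, hp]; rfl
        omega
      have hSE : SE (T j) c := dWe (hW j) (hI j) hisWTj (le_refl c)
      obtain ⟨hC1, _, _, _, _, _, _, _, _, _, _, _, _⟩ :=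
        ih (3 * tupSize T) (by omega)
      have h1 : (fextn f T).Rout ≤ (fextn f (Function.update T j (int c))).Rout := by
        have := hC1 T j c (T j) (by rw [hUT]) hHH hSE hparO
        rwa [hUT] at this
      have hRV1 : RV1 Zl c :=
        wWR (wt_mem_lopts (hW j) hZl') (by simpa [hp] using isWT_mem_lopts hisWTj hZl') hcZ
      have hltZ : tupSize (Function.update T j Zl) < tupSize T := by
        have := tup_lt_j (T := T) (j := j) (X := T j) (sizeOf_lt_of_mem_lopts hZl')
        rwa [hUT] at this
      obtain ⟨_, _, _, _, _, _, hA1, _, _, _, _, _, _⟩ :=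
        ih (3 * tupSize (Function.update T j Zl)) (by omega)
      have h2 := hA1 T j c Zl (le_refl _) hHHZ hRV1 hparO
      exact le_trans h1 (le_trans h2 hRoutZ)
    | true =>
      have hisWTj : IsWT (T j) true := by
        have := wt_par (hW j); rwa [hp] at this
      have hparO : esum T j % 2 = 1 := by
        have hpn : pn (T j) = 1 := by rw [pn, hp]; rfl
        omega
      have hSEo : SEo (T j) c := dWo1 (hW j) hisWTj (le_refl c)
      obtain ⟨_, hC1o, _, _, _, _, _, _, _, _, _, _, _⟩ :=
        ih (3 * tupSize T) (by omega)
      have h1 : (fextn f T).Rout ≤ (fextn f (Function.update T j (int c))).Rout := by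
        have := hC1o T j c (T j) (by rw [hUT]) hHH hSEo hparO
        rwa [hUT] at this
      have hRVEp : RVEp Zl c :=
        wpE (wt_mem_lopts (hW j) hZl') (invh_mem_lopts (hI j) hZl')
          (by simpa [hp] using isWT_mem_lopts hisWTj hZl') hcZ
      have hltZ : tupSize (Function.update T j Zl) < tupSize T := by
        have := tup_lt_j (T := T) (j := j) (X := T j) (sizeOf_lt_of_mem_lopts hZl')
        rwa [hUT] at this
      obtain ⟨_, _, _, _, _, _, _, _, _, hB1, _, _, _⟩ :=
        ih (3 * tupSize (Function.update T j Zl)) (by omega)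
      have h2 := hB1 T j c Zl (le_refl _) hHHZ hRVEp hparO
      exact le_trans h1 (le_trans h2 hRoutZ)

theorem master : ∀ N, BigConj S f N := by
  intro N
  induction N using Nat.strong_induction_on with
  | _ N ih =>
    exact ⟨stepC1 hf N ih, stepC1o hf N ih, stepC2 hf N ih, stepC2o hf N ih,
      stepC4 hf N ih, stepC4o hf N ih, stepA1 hf N ih, stepA2 hf N ih, stepA3 hf N ih,
      stepB1 hf N ih, stepB2 hf N ih, stepB3 hf N ih, stepE hf N ih⟩

/-- The main even-tempered inequality. -/
theorem main_even (T : Fin n → WT)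
    (hW : ∀ i, Wt (T i)) (hI : ∀ i, Invh (T i)) (hV : ∀ i, Valued (S i) (T i))
    (hpar : tsum T % 2 = 0) : (fextn f T).Rout ≤ (fextn f T).Lout :=
  (master hf (3 * tupSize T + 1)).2.2.2.2.2.2.2.2.2.2.2.2 T (le_refl _) hW hI hV hpar

end Steps2

end WT
namespace WT

variable {n : ℕ}

theorem wt_subgame {H G : WT} (hs : Subgame H G) : Wt G → Wt H := by
  induction hs with
  | refl => exact id
  | @left G' L R hmem _ ih =>
    refine fun h => ih (wt_mem_lopts (G := node L R) h ?_)
    simpa [lopts] using hmem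
  | @right G' L R hmem _ ih =>
    refine fun h => ih (wt_mem_ropts (G := node L R) h ?_)
    simpa [ropts] using hmem

theorem valued_subgame {Sj : Set ℤ} {H G : WT} (hs : Subgame H G) :
    Valued Sj G → Valued Sj H := by
  induction hs with
  | refl => exact id
  | @left G' L R hmem _ ih =>
    refine fun h => ih (valued_mem_lopts (G := node L R) h ?_)
    simpa [lopts] using hmem
  | @right G' L R hmem _ ih =>
    refine fun h => ih (valued_mem_ropts (G := node L R) h ?_)
    simpa [ropts] using hmem

/-- A bound on all the values appearing in a game. -/
def mx : WT → ℤ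
  | int m => |m|
  | node L R => max ((L.attach.map fun g => mx g.1).foldr max 0)
      ((R.attach.map fun g => mx g.1).foldr max 0)
termination_by G => sizeOf G
decreasing_by
  all_goals
    first
      | exact sizeOf_lt_of_mem_lopts (by simpa [lopts] using g.2)
      | exact sizeOf_lt_of_mem_ropts (by simpa [ropts] using g.2)

theorem le_foldr_max {l : List ℤ} {x : ℤ} (h : x ∈ l) : x ≤ l.foldr max 0 := by
  induction l with
  | nil => simp at h
  | cons y ys ih =>
    rcases List.mem_cons.1 h with rfl | h
    · exact le_max_left _ _
    · exact le_trans (ih h) (le_max_right _ _)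

theorem mx_mem_lopts {G g : WT} (hg : g ∈ G.lopts) : mx g ≤ mx G := by
  cases G with
  | int m => simp [lopts] at hg
  | node L R =>
    rw [mx]
    refine le_trans ?_ (le_max_left _ _)
    refine le_foldr_max ?_
    exact (mem_attach_map_iff (F := fun g => mx g)).2 ⟨g, by simpa [lopts] using hg, rfl⟩

theorem mx_mem_ropts {G g : WT} (hg : g ∈ G.ropts) : mx g ≤ mx G := by
  cases G with
  | int m => simp [ropts] at hg
  | node L R =>
    rw [mx]
    refine le_trans ?_ (le_max_right _ _)
    refine le_foldr_max ?_
    exact (mem_attach_map_iff (F := fun g => mx g)).2 ⟨g, by simpa [ropts] using hg, rfl⟩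

theorem mx_sub {H G : WT} (hs : Subgame H G) : mx H ≤ mx G := by
  induction hs with
  | refl => exact le_refl _
  | @left G' L R hmem _ ih =>
    exact le_trans ih (mx_mem_lopts (G := node L R) (by simpa [lopts] using hmem))
  | @right G' L R hmem _ ih =>
    exact le_trans ih (mx_mem_ropts (G := node L R) (by simpa [ropts] using hmem))

theorem out_mx : ∀ (G : WT), Wt G → |G.Lout| ≤ mx G ∧ |G.Rout| ≤ mx G := by
  intro G0
  generalize hs0 : sizeOf G0 = s
  revert G0
  induction s using Nat.strong_induction_on with
  | _ s ih =>
  intro G hGs hw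
  cases G with
  | int m => rw [Lout_int, Rout_int, mx]; exact ⟨le_refl _, le_refl _⟩
  | node L R =>
    have hne := wt_opts_ne_nil hw rfl
    have hne1 : L ≠ [] := by simpa [lopts] using hne.1
    have hne2 : R ≠ [] := by simpa [ropts] using hne.2
    constructor
    · rcases Lout_mem (R := R) hne1 with ⟨g, hg, hE⟩
      rw [hE]
      have hg' : g ∈ (node L R).lopts := by simpa [lopts] using hg
      refine le_trans ?_ (mx_mem_lopts hg')
      exact (ih _ (by rw [← hGs]; exact sizeOf_lt_of_mem_lopts hg') g rfl
        (wt_mem_lopts hw hg')).2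
    · rcases Rout_mem (L := L) hne2 with ⟨g, hg, hE⟩
      rw [hE]
      have hg' : g ∈ (node L R).ropts := by simpa [ropts] using hg
      refine le_trans ?_ (mx_mem_ropts hg')
      exact (ih _ (by rw [← hGs]; exact sizeOf_lt_of_mem_ropts hg') g rfl
        (wt_mem_ropts hw hg')).1

theorem gap_bddAbove {G : WT} (hw : Wt G) :
    BddAbove {x : WithBot ℤ | ∃ H : WT, Subgame H G ∧ IsWT H false ∧
      x = ((H.Rout - H.Lout : ℤ) : WithBot ℤ)} := by
  refine ⟨((2 * mx G : ℤ) : WithBot ℤ), ?_⟩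
  rintro x ⟨H, hs, _, rfl⟩
  have h1 := out_mx H (wt_subgame hs hw)
  have h2 := mx_sub hs
  refine WithBot.coe_le_coe.2 ?_
  have := abs_le.1 h1.1
  have := abs_le.1 h1.2
  omega

end WT
/-- if f is order-preserving and each Gᵢ is Sᵢ-valued with gap₀(Gᵢ) = 0,
then gap₀(f̃(G₁,...,Gₙ)) = 0. -/
theorem fextn_gap (n : ℕ) (S : Fin n → Set ℤ) (f : (Fin n → ℤ) → ℤ)
    (hf : ∀ x y : Fin n → ℤ, (∀ i, x i ∈ S i) → (∀ i, y i ∈ S i) → (∀ i, x i ≤ y i) → f x ≤ f y)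
    (G : Fin n → WT) (hwt : ∀ i, (G i).Wt) (hv : ∀ i, (G i).Valued (S i))
    (hgap : ∀ i, (G i).gap false = ((0 : ℤ) : WithBot ℤ)) :
    (WT.fextn f G).gap false = ((0 : ℤ) : WithBot ℤ) := by
  have hInvh : ∀ i, WT.Invh (G i) := by
    intro i H hs he
    have h0 : sSup {x : WithBot ℤ | ∃ K : WT, WT.Subgame K (G i) ∧ WT.IsWT K false ∧
        x = ((K.Rout - K.Lout : ℤ) : WithBot ℤ)} = ((0 : ℤ) : WithBot ℤ) := hgap i
    have hx : ((H.Rout - H.Lout : ℤ) : WithBot ℤ) ∈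
        {x : WithBot ℤ | ∃ K : WT, WT.Subgame K (G i) ∧ WT.IsWT K false ∧
          x = ((K.Rout - K.Lout : ℤ) : WithBot ℤ)} := ⟨H, hs, he, rfl⟩
    have hle := le_csSup (WT.gap_bddAbove (hwt i)) hx
    rw [h0] at hle
    have := WithBot.coe_le_coe.1 hle
    omega
  show sSup _ = _
  refine le_antisymm ?_ ?_
  · obtain ⟨m, hm⟩ := WT.exists_int_subgame G hwt
    refine csSup_le ⟨((0 : ℤ) : WithBot ℤ), WT.int m, hm, WT.IsWT.int m, by
      rw [WT.Rout_int, WT.Lout_int]; norm_num⟩ ?_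
    rintro x ⟨H, hs, he, rfl⟩
    obtain ⟨U, hU, rfl⟩ := WT.subgame_fextn hs G rfl
    have hWU : ∀ i, WT.Wt (U i) := fun i => WT.wt_subgame (hU i) (hwt i)
    have hIU : ∀ i, WT.Invh (U i) := fun i => WT.invh_sub (hInvh i) (hU i)
    have hVU : ∀ i, WT.Valued (S i) (U i) := fun i => WT.valued_subgame (hU i) (hv i)
    have hpar : WT.tsum U % 2 = 0 := WT.tsum_even_of_isWT_false hWU he
    have := WT.main_even hf U hWU hIU hVU hpar
    exact WithBot.coe_le_coe.2 (by omega)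
  · obtain ⟨m, hm⟩ := WT.exists_int_subgame G hwt
    refine le_csSup (WT.gap_bddAbove (WT.wt_fextn hwt)) ?_
    refine ⟨WT.int m, hm, WT.IsWT.int m, ?_⟩
    rw [WT.Rout_int, WT.Lout_int]
    norm_num
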